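/- arXiv:0802.0337 — 13 statements merged into one kernel-verified Lean document; each statement's English description precedes it below -/
import Mathlib

section
/- Given a compact space K and a sequence of continuous maps φⁿ : X_n × K → Y_n with φⁿ({*_n} × K) = {*_n} for each n, the induced map Φ : (⊡_{n∈ω} X_n) × K → ⊡_{n∈ω} Y_n defined by Φ((x_n)_n, y) = (φⁿ(x_n, y))_n is continuous. -/
open Filter Set TopologicalSpace

/-- The box topology on a countable product. -/
def boxTop (X : ℕ → Type*) [∀ n, TopologicalSpace (X n)] :
    TopologicalSpace (∀ n, X n) :=
  TopologicalSpace.generateFrom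
    {S | ∃ U : ∀ n, Set (X n), (∀ n, IsOpen (U n)) ∧ S = Set.univ.pi U}

/-- The topology of the small box product, as a subspace of the box product. -/
def sboxTop (X : ℕ → Type*) [∀ n, TopologicalSpace (X n)] (pt : ∀ n, X n) :
    TopologicalSpace {x : ∀ n, X n // ∀ᶠ n in Filter.atTop, x n = pt n} :=
  (boxTop X).induced Subtype.val

/-- Given a compact space `K` and continuous maps `φ n : X n × K → Y n` sending
`{* n} × K` to `* n`, the induced map
`Φ : (⊡ₙ X n) × K → ⊡ₙ Y n`, `Φ((xₙ)ₙ, k) = (φ n (xₙ, k))ₙ`, is continuous. -/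
theorem smallBox_induced_map_continuous (X Y : ℕ → Type*)
    [∀ n, TopologicalSpace (X n)] [∀ n, TopologicalSpace (Y n)]
    (ptX : ∀ n, X n) (ptY : ∀ n, Y n)
    (K : Type*) [TopologicalSpace K] [CompactSpace K]
    (φ : ∀ n, X n × K → Y n) (hφ : ∀ n, Continuous (φ n))
    (hpt : ∀ n (k : K), φ n (ptX n, k) = ptY n) :
    @Continuous ({x : ∀ n, X n // ∀ᶠ n in Filter.atTop, x n = ptX n} × K)
      {y : ∀ n, Y n // ∀ᶠ n in Filter.atTop, y n = ptY n}
      (@instTopologicalSpaceProd _ _ (sboxTop X ptX) inferInstance)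
      (sboxTop Y ptY)
      (fun p => ⟨fun n => φ n (p.1.val n, p.2),
        p.1.property.mono (fun n hn => by show φ n (p.1.val n, p.2) = ptY n; rw [hn]; exact hpt n p.2)⟩) := by
  letI tX : TopologicalSpace {x : ∀ n, X n // ∀ᶠ n in Filter.atTop, x n = ptX n} := sboxTop X ptX
  letI tY : TopologicalSpace {y : ∀ n, Y n // ∀ᶠ n in Filter.atTop, y n = ptY n} := sboxTop Y ptY
  apply continuous_induced_rng.2
  apply continuous_generateFrom_iff.2
  rintro S ⟨U, hUopen, rfl⟩
  rw [isOpen_iff_mem_nhds]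
  rintro ⟨x, k⟩ hxk
  rw [mem_preimage, Set.mem_univ_pi] at hxk
  obtain ⟨N, hN⟩ := eventually_atTop.1 x.property
  have key : ∀ n, ∃ V : Set (X n), ∃ W : Set K, IsOpen V ∧ IsOpen W ∧
      x.val n ∈ V ∧ k ∈ W ∧ (∀ a ∈ V, ∀ κ ∈ W, φ n (a, κ) ∈ U n) ∧ (N ≤ n → W = univ) := by
    intro n
    by_cases hn : N ≤ n
    · have hx : x.val n = ptX n := hN n hn
      have hmem : ptY n ∈ U n := by
        have h1 : φ n (x.val n, k) ∈ U n := hxk n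
        rwa [hx, hpt] at h1
      have hpi : ({ptX n} : Set (X n)) ×ˢ (univ : Set K) ⊆ φ n ⁻¹' U n := by
        rintro ⟨a, κ⟩ ⟨ha, -⟩
        simp only [mem_singleton_iff] at ha
        simpa [mem_preimage, ha, hpt n κ] using hmem
      obtain ⟨u, v, hu, hv, hsu, htv, huv⟩ :=
        generalized_tube_lemma isCompact_singleton isCompact_univ
          ((hUopen n).preimage (hφ n)) hpi
      refine ⟨u, univ, hu, isOpen_univ, ?_, mem_univ _, ?_, fun _ => rfl⟩
      · exact hsu (by rw [hx]; exact rfl)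
      · intro a ha κ _
        exact huv ⟨ha, htv (mem_univ κ)⟩
    · obtain ⟨u, v, hu, hv, hau, hkv, huv⟩ :=
        isOpen_prod_iff.1 ((hUopen n).preimage (hφ n)) (x.val n) k (hxk n)
      exact ⟨u, v, hu, hv, hau, hkv, fun a ha κ hκ => huv ⟨ha, hκ⟩, fun h => absurd h hn⟩
  choose V W hVopen hWopen hxV hkW hVW hWuniv using key
  rw [mem_nhds_prod_iff]
  refine ⟨Subtype.val ⁻¹' Set.univ.pi V, ?_, ⋂ n ∈ Finset.range N, W n, ?_, ?_⟩
  · apply IsOpen.mem_nhds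
    · exact ⟨Set.univ.pi V, TopologicalSpace.GenerateOpen.basic _ ⟨V, hVopen, rfl⟩, rfl⟩
    · intro n _; exact hxV n
  · apply IsOpen.mem_nhds
    · exact isOpen_biInter_finset fun n _ => hWopen n
    · exact mem_biInter fun n _ => hkW n
  · rintro ⟨x', k'⟩ ⟨hx', hk'⟩
    rw [mem_preimage]
    refine Set.mem_univ_pi.2 fun n => ?_
    by_cases hn : N ≤ n
    · exact hVW n _ (hx' n (mem_univ n)) k' (by rw [hWuniv n hn]; trivial)
    · exact hVW n _ (hx' n (mem_univ n)) k'
        (mem_iInter₂.1 hk' n (Finset.mem_range.2 (lt_of_not_ge hn)))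
end

section
/- If for each n ∈ ω the subset A_n is homotopy dense in X_n relative to the base point *_n (i.e., there is a homotopy φ_t : X_n → X_n with φ_0 = id, φ_t(*_n) = *_n for all t, and φ_t(X_n) ⊆ A_n for t ∈ (0,1]), then the small box product ⊡_{n∈ω} A_n is homotopy dense in ⊡_{n∈ω} X_n. -/
open Filter Set TopologicalSpace

/-- If each `A n` is homotopy dense in `X n` rel. the base point `pt n`, then the small
box product `⊡ₙ A n` is homotopy dense in `⊡ₙ X n`. -/
theorem smallBox_homotopyDense (X : ℕ → Type*) [∀ n, TopologicalSpace (X n)]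
    (pt : ∀ n, X n) (A : ∀ n, Set (X n))
    (h : ∀ n, ∃ φ : X n × unitInterval → X n, Continuous φ ∧
      (∀ x, φ (x, 0) = x) ∧ (∀ t, φ (pt n, t) = pt n) ∧
      (∀ x t, t ≠ 0 → φ (x, t) ∈ A n)) :
    ∃ Φ : {x : ∀ n, X n // ∀ᶠ n in Filter.atTop, x n = pt n} × unitInterval →
          {x : ∀ n, X n // ∀ᶠ n in Filter.atTop, x n = pt n},
      @Continuous _ _ (@instTopologicalSpaceProd _ _ (sboxTop X pt) inferInstance)
        (sboxTop X pt) Φ ∧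
      (∀ x, Φ (x, 0) = x) ∧
      (∀ x t, t ≠ 0 → ∀ n, (Φ (x, t)).val n ∈ A n) := by
  choose φ hcont h0 hpt hA using h
  letI tS : TopologicalSpace {x : ∀ n, X n // ∀ᶠ n in Filter.atTop, x n = pt n} :=
    sboxTop X pt
  refine ⟨fun p => ⟨fun n => φ n (p.1.val n, p.2),
    p.1.2.mono fun n hn => by dsimp only; rw [hn, hpt]⟩, ?_, ?_, ?_⟩
  · -- continuity
    apply continuous_induced_rng.mpr
    show @Continuous _ _ _ (boxTop X) _
    rw [boxTop, continuous_generateFrom_iff]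
    rintro S ⟨U, hUopen, rfl⟩
    rw [isOpen_iff_mem_nhds]
    rintro ⟨⟨x, hx⟩, t⟩ hmem
    simp only [mem_preimage, Function.comp_apply, mem_univ_pi] at hmem
    obtain ⟨N, hN⟩ := eventually_atTop.mp hx
    have key : ∀ n, ∃ V : Set (X n), ∃ W : Set unitInterval,
        IsOpen V ∧ IsOpen W ∧ x n ∈ V ∧ t ∈ W ∧ (N ≤ n → W = univ) ∧
        ∀ y s, y ∈ V → s ∈ W → φ n (y, s) ∈ U n := by
      intro n
      by_cases hn : N ≤ n
      · have hxn : x n = pt n := hN n hn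
        have hsub : ({x n} : Set (X n)) ×ˢ (univ : Set unitInterval) ⊆
            φ n ⁻¹' U n := by
          rintro ⟨y, s⟩ ⟨hy, -⟩
          simp only [mem_singleton_iff] at hy
          have : φ n (x n, t) ∈ U n := hmem n
          rw [hxn, hpt] at this
          simpa [hy, hxn, hpt] using this
        obtain ⟨V, W, hV, hW, hxV, hWu, hsub'⟩ := generalized_tube_lemma
          isCompact_singleton isCompact_univ ((hUopen n).preimage (hcont n)) hsub
        refine ⟨V, univ, hV, isOpen_univ, hxV rfl, mem_univ _, fun _ => rfl,
          fun y s hy _ => hsub' (show (y, s) ∈ V ×ˢ W from ⟨hy, hWu (mem_univ s)⟩)⟩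
      · have hopen : IsOpen (φ n ⁻¹' U n) := (hUopen n).preimage (hcont n)
        have hmemn : (x n, t) ∈ φ n ⁻¹' U n := hmem n
        obtain ⟨V, W, hV, hW, hxV, htW, hsub'⟩ := isOpen_prod_iff.mp hopen _ _ hmemn
        exact ⟨V, W, hV, hW, hxV, htW, fun hle => absurd hle hn,
          fun y s hy hs => hsub' ⟨hy, hs⟩⟩
    choose V W hV hW hxV htW hWuniv hφ using key
    refine mem_nhds_iff.mpr ⟨(Subtype.val ⁻¹' univ.pi V) ×ˢ
      (⋂ i ∈ Finset.range N, W i), ?_, ?_, ?_⟩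
    · rintro ⟨⟨y, hy⟩, s⟩ ⟨hy1, hs⟩
      simp only [mem_preimage, Function.comp_apply, mem_univ_pi]
      intro n
      refine hφ n (y n) s (hy1 n (mem_univ n)) ?_
      by_cases hn : N ≤ n
      · rw [hWuniv n hn]; exact mem_univ s
      · exact mem_iInter₂.mp hs n (Finset.mem_range.mpr (not_le.mp hn))
    · refine IsOpen.prod ?_ ?_
      · exact ⟨univ.pi V, TopologicalSpace.GenerateOpen.basic _ ⟨V, hV, rfl⟩, rfl⟩
      · exact isOpen_biInter_finset fun i _ => hW i
    · exact ⟨fun n _ => hxV n, mem_iInter₂.mpr fun i _ => htW i⟩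
  · intro x
    exact Subtype.ext (funext fun n => h0 n (x.val n))
  · intro x t ht n
    exact hA n (x.val n) t ht
end

section
/- If each pointed space (X_n, *_n) is contractible relative to its base point (i.e., there is a homotopy φ_t : X_n → X_n with φ_0 = id, φ_1 constant, and φ_t(*_n) = *_n for all t), then the small box product ⊡_{n∈ω} X_n is contractible relative to its canonical base point (*_n)_{n∈ω}. -/
open Filter Set TopologicalSpace

open Topology

/-- If each pointed space `(X n, pt n)` is contractible rel. its base point, then the
small box product `⊡ₙ X n` is contractible rel. its canonical base point `(pt n)ₙ`. -/
theorem smallBox_contractible (X : ℕ → Type*) [∀ n, TopologicalSpace (X n)]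
    (pt : ∀ n, X n)
    (h : ∀ n, ∃ φ : X n × unitInterval → X n, Continuous φ ∧
      (∀ x, φ (x, 0) = x) ∧ (∀ t, φ (pt n, t) = pt n) ∧
      (∀ x, φ (x, 1) = pt n)) :
    ∃ Φ : {x : ∀ n, X n // ∀ᶠ n in Filter.atTop, x n = pt n} × unitInterval →
          {x : ∀ n, X n // ∀ᶠ n in Filter.atTop, x n = pt n},
      @Continuous _ _ (@instTopologicalSpaceProd _ _ (sboxTop X pt) inferInstance)
        (sboxTop X pt) Φ ∧
      (∀ x, Φ (x, 0) = x) ∧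
      (∀ t, Φ (⟨pt, Filter.Eventually.of_forall fun _ => rfl⟩, t)
          = ⟨pt, Filter.Eventually.of_forall fun _ => rfl⟩) ∧
      (∀ x, Φ (x, 1) = ⟨pt, Filter.Eventually.of_forall fun _ => rfl⟩) := by
  choose φ hc h0 hp h1 using h
  letI : TopologicalSpace {x : ∀ n, X n // ∀ᶠ n in Filter.atTop, x n = pt n} :=
    sboxTop X pt
  refine ⟨fun p => ⟨fun n => φ n (p.1.1 n, p.2),
      p.1.2.mono fun n hn => show φ n (p.1.1 n, p.2) = pt n by rw [hn, hp]⟩, ?_, ?_, ?_, ?_⟩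
  · show Continuous[_, (boxTop X).induced Subtype.val] _
    rw [continuous_induced_rng]
    show Continuous[_, generateFrom _] _
    rw [continuous_generateFrom_iff]
    rintro S ⟨U, hU, rfl⟩
    rw [isOpen_iff_forall_mem_open]
    rintro ⟨x, t⟩ hmem
    simp only [mem_preimage, Function.comp_apply, mem_univ_pi] at hmem
    obtain ⟨N, hN⟩ := eventually_atTop.1 x.2
    have key : ∀ n, ∃ (A : Set (X n)) (W : Set unitInterval),
        IsOpen A ∧ IsOpen W ∧ x.1 n ∈ A ∧ t ∈ W ∧
        (∀ a ∈ A, ∀ s ∈ W, φ n (a, s) ∈ U n) ∧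
        (N ≤ n → ∀ a ∈ A, ∀ s, φ n (a, s) ∈ U n) := by
      intro n
      rcases le_or_gt N n with hn | hn
      · have hxn : x.1 n = pt n := hN n hn
        have hptU : pt n ∈ U n := by
          have := hmem n; rwa [hxn, hp] at this
        have hsub : ({pt n} : Set (X n)) ×ˢ (univ : Set unitInterval) ⊆
            φ n ⁻¹' (U n) := by
          rintro ⟨a, s⟩ ⟨ha, -⟩
          simp only [mem_singleton_iff] at ha
          subst ha
          simpa only [mem_preimage, hp] using hptU
        obtain ⟨u, v, hu, hv, hsu, hsv, huv⟩ :=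
          generalized_tube_lemma isCompact_singleton isCompact_univ
            ((hU n).preimage (hc n)) hsub
        refine ⟨u, univ, hu, isOpen_univ, ?_, mem_univ _, ?_, ?_⟩
        · rw [hxn]; exact hsu rfl
        · intro a ha s _
          exact huv (Set.mk_mem_prod ha (hsv (mem_univ s)))
        · intro _ a ha s
          exact huv (Set.mk_mem_prod ha (hsv (mem_univ s)))
      · have hVopen : IsOpen (φ n ⁻¹' U n) := (hU n).preimage (hc n)
        obtain ⟨u, w, hu, hw, hxu, htw, huw⟩ :=
          isOpen_prod_iff.1 hVopen (x.1 n) t (hmem n)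
        refine ⟨u, w, hu, hw, hxu, htw, ?_, ?_⟩
        · intro a ha s hs
          exact huw (Set.mk_mem_prod ha hs)
        · intro hle; omega
    choose A W hA hW hxA htW hAW htube using key
    have hval : Continuous[sboxTop X pt, boxTop X]
        (Subtype.val : {x : ∀ n, X n // ∀ᶠ n in Filter.atTop, x n = pt n} → ∀ n, X n) :=
      continuous_induced_dom
    have hbox : IsOpen[boxTop X] (univ.pi A) :=
      isOpen_generateFrom_of_mem ⟨A, hA, rfl⟩
    refine ⟨(Subtype.val ⁻¹' univ.pi A) ×ˢ ⋂ n ∈ Finset.range N, W n, ?_, ?_, ?_⟩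
    · rintro ⟨y, s⟩ ⟨hy, hs⟩
      simp only [mem_preimage, Function.comp_apply, mem_univ_pi]
      intro n
      rcases le_or_gt N n with hn | hn
      · exact htube n hn _ (hy n (mem_univ n)) s
      · refine hAW n _ (hy n (mem_univ n)) s ?_
        simp only [Set.mem_iInter] at hs
        exact hs n (Finset.mem_range.2 hn)
    · refine IsOpen.prod ?_ ?_
      · exact @Continuous.isOpen_preimage _ _ (sboxTop X pt) (boxTop X) _ hval _ hbox
      · exact isOpen_biInter_finset fun n _ => hW n
    · refine ⟨?_, ?_⟩
      · intro n _; exact hxA n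
      · simp only [Set.mem_iInter]; intro n _; exact htW n
  · intro x; exact Subtype.ext (funext fun n => h0 n _)
  · intro t; exact Subtype.ext (funext fun n => hp n t)
  · intro x; exact Subtype.ext (funext fun n => h1 n _)
end

section
/- Let G be a topological group and (G_n)_{n∈ω} a sequence of subgroups of G. Then the multiplication map p : ⊡_{n∈ω} G_n → G defined by p(x_0, …, x_k, e, e, …) = x_0 · x_1 ⋯ x_k is continuous. -/
open Filter Set TopologicalSpace

/-- A decreasing sequence of open neighborhoods of `1` with `T (k+1) * T (k+1) ⊆ T k`. -/
lemma smallBox_aux_exists_T {G : Type*} [Group G] [TopologicalSpace G] [IsTopologicalGroup G]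
    (U₀ : Set G) (hU₀ : IsOpen U₀) (h1 : (1 : G) ∈ U₀) :
    ∃ T : ℕ → Set G, T 0 = U₀ ∧ (∀ k, IsOpen (T k)) ∧ (∀ k, (1 : G) ∈ T k) ∧
      ∀ k, ∀ v ∈ T (k + 1), ∀ w ∈ T (k + 1), v * w ∈ T k := by
  have key : ∀ s : {s : Set G // IsOpen s ∧ (1 : G) ∈ s},
      ∃ t : Set G, IsOpen t ∧ (1 : G) ∈ t ∧ ∀ v ∈ t, ∀ w ∈ t, v * w ∈ s.1 := by
    rintro ⟨s, hs, h1s⟩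
    obtain ⟨t, ht, h1t, hsplit⟩ := exists_open_nhds_one_split (hs.mem_nhds h1s)
    exact ⟨t, ht, h1t, hsplit⟩
  let T : ℕ → {s : Set G // IsOpen s ∧ (1 : G) ∈ s} := fun k =>
    Nat.rec ⟨U₀, hU₀, h1⟩
      (fun _ prev => ⟨(key prev).choose, (key prev).choose_spec.1, (key prev).choose_spec.2.1⟩) k
  refine ⟨fun k => (T k).1, rfl, fun k => (T k).2.1, fun k => (T k).2.2, fun k => ?_⟩
  exact (key (T k)).choose_spec.2.2

/-- Products of elements chosen from successively deeper `T`-levels stay in `T k`. -/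
lemma smallBox_aux_tail_prod {G : Type*} [Group G] (T : ℕ → Set G)
    (h1 : ∀ k, (1 : G) ∈ T k)
    (hsplit : ∀ k, ∀ v ∈ T (k + 1), ∀ w ∈ T (k + 1), v * w ∈ T k) :
    ∀ (M k : ℕ) (y : ℕ → G), (∀ i < M, y i ∈ T (k + i + 1)) →
      ((List.range M).map y).prod ∈ T k := by
  intro M
  induction M with
  | zero => intro k y _; simpa using h1 k
  | succ M ih =>
    intro k y hy
    rw [List.range_succ_eq_map, List.map_cons, List.prod_cons, List.map_map]
    have h0 : y 0 ∈ T (k + 1) := by simpa using hy 0 (Nat.succ_pos M)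
    have htail : ((List.range M).map (y ∘ Nat.succ)).prod ∈ T (k + 1) := by
      apply ih (k + 1) (y ∘ Nat.succ)
      intro i hi
      have := hy (i + 1) (by omega)
      simpa [Function.comp, Nat.add_assoc, Nat.add_comm, Nat.add_left_comm] using this
    exact hsplit k _ h0 _ htail

/-- Let `G` be a topological group and `(Gₙ)` a sequence of subgroups.  The multiplication
map `p : ⊡ₙ Gₙ → G`, `p(x₀,…,x_k,e,e,…) = x₀·x₁⋯x_k`, is continuous with respect to the
small box topology. -/
theorem smallBox_mul_continuous (G : Type*) [Group G] [TopologicalSpace G]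
    [IsTopologicalGroup G] (Gn : ℕ → Subgroup G)
    (p : {x : ∀ _ : ℕ, G // (∀ n, x n ∈ Gn n) ∧ ∀ᶠ n in Filter.atTop, x n = 1} → G)
    (hp : ∀ x, ∀ N : ℕ, (∀ n, N ≤ n → x.val n = 1) →
      p x = ((List.range N).map x.val).prod) :
    @Continuous _ _ ((boxTop fun _ : ℕ => G).induced Subtype.val) inferInstance p := by
  rw [continuous_def]
  intro V hV
  -- key pointwise claim
  have claim : ∀ x : {x : ∀ _ : ℕ, G // (∀ n, x n ∈ Gn n) ∧ ∀ᶠ n in Filter.atTop, x n = 1},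
      x ∈ p ⁻¹' V → ∃ U : ℕ → Set G,
      (∀ n, IsOpen (U n)) ∧ (∀ n, x.val n ∈ U n) ∧
      ∀ y, (∀ n, y.val n ∈ U n) → y ∈ p ⁻¹' V := by
    intro x hx
    obtain ⟨N, hN⟩ := (x.2.2).exists_forall_of_atTop
    have hgV : p x ∈ V := hx
    have hgprod : p x = ((List.range N).map x.val).prod := hp x N (fun n hn => hN n hn)
    -- neighborhood of 1 : Q = (p x * ·)⁻¹' V
    have hQopen : IsOpen ((fun h => p x * h) ⁻¹' V) :=
      hV.preimage (continuous_const.mul continuous_id)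
    have h1Q : (1 : G) ∈ (fun h => p x * h) ⁻¹' V := by simpa using hgV
    obtain ⟨U₀, hU₀open, h1U₀, hU₀split⟩ :=
      exists_open_nhds_one_split (hQopen.mem_nhds h1Q)
    obtain ⟨T, hT0, hTopen, hT1, hTsplit⟩ := smallBox_aux_exists_T U₀ hU₀open h1U₀
    -- head: continuity of the finite product map
    have hfcont : Continuous fun y : ℕ → G => (p x)⁻¹ * ((List.range N).map y).prod := by
      apply continuous_const.mul
      exact continuous_list_prod (f := fun i (y : ℕ → G) => y i) (List.range N)
        (fun i _ => continuous_apply i)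
    have hSopen : IsOpen {y : ℕ → G | (p x)⁻¹ * ((List.range N).map y).prod ∈ U₀} :=
      hU₀open.preimage hfcont
    have hxS : x.val ∈ {y : ℕ → G | (p x)⁻¹ * ((List.range N).map y).prod ∈ U₀} := by
      simp only [mem_setOf_eq, ← hgprod]
      simpa using h1U₀
    obtain ⟨F, W, hFW, hFWsub⟩ := isOpen_pi_iff.mp hSopen x.val hxS
    -- define the box neighborhood
    refine ⟨fun n => (if n ∈ F then W n else univ) ∩ (if N ≤ n then T (n - N + 1) else univ),
      ?_, ?_, ?_⟩
    · intro n
      refine IsOpen.inter ?_ ?_ <;> split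
      · exact (hFW n ‹_›).1
      · exact isOpen_univ
      · exact hTopen _
      · exact isOpen_univ
    · intro n
      constructor
      · split
        · exact (hFW n ‹_›).2
        · trivial
      · split
        · have hx1 : x.val n = 1 := hN n ‹_›
          rw [hx1]; exact hT1 _
        · trivial
    · intro y hy
      -- head product
      have hyW : y.val ∈ (↑F : Set ℕ).pi W := by
        intro n hn
        have hn' : n ∈ F := hn
        have h := (hy n).1
        rwa [if_pos hn'] at h
      have hhead : (p x)⁻¹ * ((List.range N).map y.val).prod ∈ U₀ := hFWsub hyW
      -- tail
      obtain ⟨M₀, hM₀⟩ := (y.2.2).exists_forall_of_atTop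
      have hyM : ∀ n, max N M₀ ≤ n → y.val n = 1 :=
        fun n hn => hM₀ n (le_trans (le_max_right _ _) hn)
      have hpy : p y = ((List.range (max N M₀)).map y.val).prod := hp y _ hyM
      have hMN : max N M₀ = N + (max N M₀ - N) := by omega
      have htail : ((List.range (max N M₀ - N)).map (fun i => y.val (N + i))).prod ∈ U₀ := by
        rw [← hT0]
        apply smallBox_aux_tail_prod T hT1 hTsplit (max N M₀ - N) 0
        intro i _
        have h := (hy (N + i)).2
        have hle : N ≤ N + i := Nat.le_add_right _ _
        rw [if_pos hle] at h
        simpa [Nat.add_sub_cancel_left] using h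
      have hsplitprod : ((List.range (max N M₀)).map y.val).prod
          = ((List.range N).map y.val).prod *
            ((List.range (max N M₀ - N)).map (fun i => y.val (N + i))).prod := by
        conv_lhs => rw [hMN]
        rw [List.range_add, List.map_append, List.prod_append, List.map_map]
        rfl
      have hfinal : p x * ((p x)⁻¹ * ((List.range N).map y.val).prod *
          ((List.range (max N M₀ - N)).map (fun i => y.val (N + i))).prod) ∈ V :=
        hU₀split _ hhead _ htail
      have heq : p x * ((p x)⁻¹ * ((List.range N).map y.val).prod *
          ((List.range (max N M₀ - N)).map (fun i => y.val (N + i))).prod)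
          = ((List.range N).map y.val).prod *
            ((List.range (max N M₀ - N)).map (fun i => y.val (N + i))).prod := by group
      show p y ∈ V
      rw [hpy, hsplitprod, ← heq]
      exact hfinal
  -- assemble the open set
  choose U hUopen hxU hUsub using claim
  rw [@isOpen_induced_iff _ _ (boxTop fun _ : ℕ => G) _ _]
  refine ⟨⋃ x, ⋃ (hx : x ∈ p ⁻¹' V), Set.univ.pi (U x hx), ?_, ?_⟩
  · refine @isOpen_iUnion _ _ (boxTop fun _ : ℕ => G) _ fun x =>
      @isOpen_iUnion _ _ (boxTop fun _ : ℕ => G) _ fun hx => ?_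
    exact @isOpen_generateFrom_of_mem _ _ _ ⟨U x hx, hUopen x hx, rfl⟩
  · ext y
    simp only [mem_preimage, mem_iUnion]
    constructor
    · rintro ⟨x, hx, hy⟩
      exact hUsub x hx y (fun n => hy n (mem_univ n))
    · intro hy
      exact ⟨y, hy, fun n _ => hxU y hy n⟩
end

section
/- If a topological group G is semi-locally contractible at its identity e (i.e., e has a neighborhood V that is contractible in G), then G is strongly locally contractible at every point; in particular every neighborhood U of e contains a neighborhood V of e admitting a homotopy in U contracting V to e while fixing e throughout. -/
open Filter Set TopologicalSpace

/-- If a topological group `G` is semi-locally contractible at the identity (the identity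
has a neighborhood contractible in `G`), then `G` is strongly locally contractible at
every point: every neighborhood `U` of any `g ∈ G` contains a neighborhood `V` of `g`
admitting a homotopy in `U` contracting `V` to `g` which fixes `g` throughout. -/
theorem topologicalGroup_strongly_locally_contractible (G : Type*) [Group G]
    [TopologicalSpace G] [IsTopologicalGroup G]
    (h : ∃ V ∈ nhds (1 : G), ∃ H : V × unitInterval → G, Continuous H ∧
      (∀ v : V, H (v, 0) = v) ∧ ∃ c : G, ∀ v : V, H (v, 1) = c) :
    ∀ g : G, ∀ U ∈ nhds g, ∃ V ∈ nhds g, V ⊆ U ∧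
      ∃ φ : V × unitInterval → G, Continuous φ ∧
        (∀ (v : V) (t : unitInterval), φ (v, t) ∈ U) ∧
        (∀ v : V, φ (v, 0) = v) ∧
        (∀ (t : unitInterval) (hg : g ∈ V), φ (⟨g, hg⟩, t) = g) ∧
        (∀ v : V, φ (v, 1) = g) := by
  obtain ⟨V₀, hV₀, H, Hcont, H0, c, H1⟩ := h
  intro g U hU
  have h1V₀ : (1 : G) ∈ V₀ := mem_of_mem_nhds hV₀
  set e : V₀ := ⟨1, h1V₀⟩ with he
  -- normalized homotopy fixing 1
  set k : V₀ × unitInterval → G := fun p => (H (e, p.2))⁻¹ * H p with hk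
  have kcont : Continuous k := by
    apply Continuous.mul
    · exact (Hcont.comp (by fun_prop)).inv
    · exact Hcont
  have ke : ∀ t, k (e, t) = 1 := fun t => inv_mul_cancel _
  have k0 : ∀ v : V₀, k (v, 0) = v := by
    intro v; simp [hk, H0, he]
  have k1 : ∀ v : V₀, k (v, 1) = 1 := by
    intro v; simp [hk, H1]
  -- pull U back to a neighborhood of 1
  set U' : Set G := (fun x => g * x) ⁻¹' U with hU'
  have hU'nhds : U' ∈ nhds (1 : G) := by
    have : Tendsto (fun x => g * x) (nhds (1 : G)) (nhds g) := by
      simpa using (continuous_mul_left g).tendsto (1 : G)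
    exact this hU
  set W : Set G := interior U' with hW
  have hWopen : IsOpen W := isOpen_interior
  have h1W : (1 : G) ∈ W := mem_interior_iff_mem_nhds.2 hU'nhds
  have hWU : ∀ x ∈ W, g * x ∈ U := fun x hx => (interior_subset hx : x ∈ U')
  -- tube lemma
  obtain ⟨u, v, huo, -, heu, hvuniv, huv⟩ :=
    generalized_tube_lemma (isCompact_singleton (x := e)) (isCompact_univ (X := unitInterval))
      (hWopen.preimage kcont) (by
        rintro ⟨y, t⟩ ⟨hy, -⟩
        simp only [mem_singleton_iff] at hy
        subst hy
        simpa using (ke t ▸ h1W : k (e, t) ∈ W))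
  have hku : ∀ y ∈ u, ∀ t : unitInterval, k (y, t) ∈ W := by
    intro y hy t
    exact huv ⟨hy, hvuniv (mem_univ t)⟩
  obtain ⟨A, hAopen, hA⟩ := isOpen_induced_iff.mp huo
  have h1A : (1 : G) ∈ A := by
    have := heu rfl
    rw [← hA] at this; exact this
  -- the shrunk neighborhood of 1
  set V₁ : Set G := A ∩ interior V₀ with hV₁
  have hV₁open : IsOpen V₁ := hAopen.inter isOpen_interior
  have h1V₁ : (1 : G) ∈ V₁ := ⟨h1A, mem_interior_iff_mem_nhds.2 hV₀⟩
  have hV₁V₀ : V₁ ⊆ V₀ := fun x hx => interior_subset hx.2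
  have hV₁u : ∀ x (hx : x ∈ V₁), (⟨x, hV₁V₀ hx⟩ : V₀) ∈ u := by
    intro x hx
    rw [← hA]; exact hx.1
  -- translate by g
  refine ⟨(fun x => g⁻¹ * x) ⁻¹' V₁, ?_, ?_, ?_⟩
  · have : ContinuousAt (fun x => g⁻¹ * x) g := by fun_prop
    apply this
    simpa using hV₁open.mem_nhds h1V₁
  · intro x hx
    have hx' : g⁻¹ * x ∈ V₁ := hx
    have := hWU _ (by
      have := hku _ (hV₁u _ hx') 0
      rwa [k0] at this)
    simpa [mul_assoc] using this
  · refine ⟨fun p => g * k (⟨g⁻¹ * (p.1 : G), hV₁V₀ p.1.2⟩, p.2), ?_, ?_, ?_, ?_, ?_⟩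
    · apply continuous_const.mul
      apply kcont.comp
      refine Continuous.prodMk ?_ continuous_snd
      exact Continuous.subtype_mk (continuous_const.mul (continuous_subtype_val.comp continuous_fst)) _
    · rintro ⟨x, hx⟩ t
      exact hWU _ (hku _ (hV₁u _ hx) t)
    · rintro ⟨x, hx⟩
      simp only [k0]
      simp [mul_assoc]
    · intro t hg
      have : (⟨g⁻¹ * g, hV₁V₀ hg⟩ : V₀) = e := by
        apply Subtype.ext; simp [he]
      simp only [this, ke, mul_one]
    · rintro ⟨x, hx⟩
      simp [k1]
end

section
/- For a paracompact Hausdorff space M, the homeomorphism group H(M) endowed with the Whitney topology is a topological group: both composition and inversion are continuous. -/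
open Filter Set TopologicalSpace

/-- `h` and `g` are `𝒰`-near. -/
def UNear {M : Type*} [TopologicalSpace M] (h g : M ≃ₜ M) (𝒰 : Set (Set M)) : Prop :=
  ∀ x : M, ∃ U ∈ 𝒰, h x ∈ U ∧ g x ∈ U

/-- `𝒰` is an open cover of `M`. -/
def IsOpenCover {M : Type*} [TopologicalSpace M] (𝒰 : Set (Set M)) : Prop :=
  (∀ U ∈ 𝒰, IsOpen U) ∧ ⋃₀ 𝒰 = Set.univ

/-- The Whitney topology on the homeomorphism group of `M`, generated by the sets
`𝒰(h) = {g : (h,g) ≺ 𝒰}` for `h ∈ H(M)` and open covers `𝒰` of `M`. -/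
def whitney (M : Type*) [TopologicalSpace M] : TopologicalSpace (M ≃ₜ M) :=
  TopologicalSpace.generateFrom
    {S | ∃ h : M ≃ₜ M, ∃ 𝒰 : Set (Set M), IsOpenCover 𝒰 ∧ S = {g | UNear h g 𝒰}}

lemma UNear.refl {M : Type*} [TopologicalSpace M] (f : M ≃ₜ M) {𝒱 : Set (Set M)}
    (h : IsOpenCover 𝒱) : UNear f f 𝒱 := fun x => by
  have : f x ∈ ⋃₀ 𝒱 := h.2 ▸ mem_univ _
  obtain ⟨V, hV, hx⟩ := this
  exact ⟨V, hV, hx, hx⟩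

lemma whitney_basic_isOpen {M : Type*} [TopologicalSpace M] (f : M ≃ₜ M) {𝒱 : Set (Set M)}
    (h : IsOpenCover 𝒱) : @IsOpen _ (whitney M) {g | UNear f g 𝒱} :=
  TopologicalSpace.GenerateOpen.basic _ ⟨f, 𝒱, h, rfl⟩

lemma whitney_isOpen {M : Type*} [TopologicalSpace M] {O : Set (M ≃ₜ M)}
    (h : ∀ f ∈ O, ∃ 𝒱 : Set (Set M), IsOpenCover 𝒱 ∧ {g | UNear f g 𝒱} ⊆ O) :
    @IsOpen _ (whitney M) O := by
  letI := whitney M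
  choose 𝒱 hcov hsub using h
  have hO : O = ⋃ (f : M ≃ₜ M), ⋃ (hf : f ∈ O), {g | UNear f g (𝒱 f hf)} := by
    apply Subset.antisymm
    · intro f hf
      exact mem_iUnion₂.2 ⟨f, hf, UNear.refl f (hcov f hf)⟩
    · intro g hg
      obtain ⟨f, hf, hg⟩ := mem_iUnion₂.1 hg
      exact hsub f hf hg
  rw [hO]
  exact isOpen_iUnion fun f => isOpen_iUnion fun hf => whitney_basic_isOpen f (hcov f hf)

/-- Barycentric refinement: every open cover of a paracompact Hausdorff space admits an open
refinement `𝒱` such that for every point `x` the star of `x` with respect to `𝒱` is contained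
in some member of the original cover. -/
lemma exists_barycentric {M : Type*} [TopologicalSpace M] [ParacompactSpace M] [T2Space M]
    {𝒰 : Set (Set M)} (h𝒰 : IsOpenCover 𝒰) :
    ∃ 𝒱 : Set (Set M), IsOpenCover 𝒱 ∧ ∀ x : M, ∃ U ∈ 𝒰, ∀ V ∈ 𝒱, x ∈ V → V ⊆ U := by
  classical
  obtain ⟨ho, hcov⟩ := h𝒰
  have hUcov : ⋃ i : 𝒰, (i : Set M) = univ := by
    rw [← hcov, sUnion_eq_iUnion]
  obtain ⟨v, hvo, hvcov, hvlf, hvsub⟩ :=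
    precise_refinement (fun i : 𝒰 => (i : Set M)) (fun i => ho i i.2) hUcov
  obtain ⟨t, htcov, hto, htsub⟩ :=
    exists_iUnion_eq_closure_subset hvo (fun x => hvlf.point_finite x) hvcov
  have htlf : LocallyFinite fun i => closure (t i) :=
    (hvlf.subset fun i => (subset_closure.trans (htsub i))).closure
  set C : M → Set 𝒰 := fun x => {i | x ∈ closure (t i)} with hC
  have hCfin : ∀ x, (C x).Finite := fun x => htlf.point_finite x
  have hclosed : ∀ x : M, IsClosed (⋃ i : {i : 𝒰 // x ∉ closure (t i)}, closure (t i.1)) :=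
    fun x => (htlf.comp_injective Subtype.val_injective).isClosed_iUnion fun i => isClosed_closure
  set V : M → Set M := fun x =>
    (⋂ i ∈ C x, v i) ∩ (⋃ i : {i : 𝒰 // x ∉ closure (t i)}, closure (t i.1))ᶜ with hV
  have hVopen : ∀ x, IsOpen (V x) := fun x =>
    ((hCfin x).isOpen_biInter fun i _ => hvo i).inter (hclosed x).isOpen_compl
  have hmem : ∀ x, x ∈ V x := by
    intro x
    constructor
    · exact mem_iInter₂.2 fun i hi => htsub i hi
    · intro hx
      obtain ⟨i, hi⟩ := mem_iUnion.1 hx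
      exact i.2 hi
  refine ⟨range V, ⟨?_, ?_⟩, ?_⟩
  · rintro _ ⟨x, rfl⟩; exact hVopen x
  · apply eq_univ_of_forall
    intro x
    exact ⟨V x, mem_range_self x, hmem x⟩
  · intro x
    have hx : x ∈ ⋃ i, t i := htcov ▸ mem_univ x
    obtain ⟨i, hi⟩ := mem_iUnion.1 hx
    refine ⟨(i : Set M), i.2, ?_⟩
    rintro _ ⟨y, rfl⟩ hxV
    have hiy : i ∈ C y := by
      by_contra hny
      exact hxV.2 (mem_iUnion.2 ⟨⟨i, hny⟩, subset_closure hi⟩)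
    intro z hz
    exact hvsub i (mem_iInter₂.1 hz.1 i hiy)

/-- For a paracompact Hausdorff space `M`, the homeomorphism group `H(M)` with the
Whitney topology is a topological group: composition and inversion are continuous. -/
theorem whitney_topologicalGroup (M : Type*) [TopologicalSpace M]
    [ParacompactSpace M] [T2Space M] :
    @Continuous ((M ≃ₜ M) × (M ≃ₜ M)) (M ≃ₜ M)
      (@instTopologicalSpaceProd _ _ (whitney M) (whitney M)) (whitney M)
      (fun p => p.2.trans p.1) ∧
    @Continuous (M ≃ₜ M) (M ≃ₜ M) (whitney M) (whitney M) Homeomorph.symm := by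
  letI : TopologicalSpace (M ≃ₜ M) := whitney M
  constructor
  · refine continuous_generateFrom_iff.mpr ?_
    rintro S ⟨h, 𝒰, h𝒰, rfl⟩
    show IsOpen {p : (M ≃ₜ M) × (M ≃ₜ M) | UNear h (p.2.trans p.1) 𝒰}
    rw [isOpen_prod_iff]
    intro f₁ f₂ hf
    replace hf : UNear h (f₂.trans f₁) 𝒰 := hf
    set e : M ≃ₜ M := h.symm.trans (f₂.trans f₁) with he
    set 𝒲 : Set (Set M) := (fun U => U ∩ e '' U) '' 𝒰 with h𝒲
    have h𝒲cov : IsOpenCover 𝒲 := by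
      constructor
      · rintro _ ⟨U, hU, rfl⟩
        exact (h𝒰.1 U hU).inter (e.isOpenMap U (h𝒰.1 U hU))
      · apply eq_univ_of_forall
        intro y
        obtain ⟨U, hU, hhx, hfx⟩ := hf ((f₂.trans f₁).symm y)
        refine ⟨U ∩ e '' U, ⟨U, hU, rfl⟩, ?_, ⟨h ((f₂.trans f₁).symm y), hhx, ?_⟩⟩
        · simpa using hfx
        · simp [he]
    obtain ⟨𝒱, h𝒱cov, hbar⟩ := exists_barycentric h𝒲cov
    set 𝒱₂ : Set (Set M) := (fun V => f₁ ⁻¹' V) '' 𝒱 with h𝒱₂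
    have h𝒱₂cov : IsOpenCover 𝒱₂ := by
      constructor
      · rintro _ ⟨Vw, hVw, rfl⟩
        exact (h𝒱cov.1 Vw hVw).preimage f₁.continuous
      · apply eq_univ_of_forall
        intro x
        have : f₁ x ∈ ⋃₀ 𝒱 := h𝒱cov.2 ▸ mem_univ _
        obtain ⟨Vw, hVw, hx⟩ := this
        exact ⟨f₁ ⁻¹' Vw, ⟨Vw, hVw, rfl⟩, hx⟩
    refine ⟨{g | UNear f₁ g 𝒱}, {g | UNear f₂ g 𝒱₂},
      whitney_basic_isOpen f₁ h𝒱cov, whitney_basic_isOpen f₂ h𝒱₂cov,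
      UNear.refl f₁ h𝒱cov, UNear.refl f₂ h𝒱₂cov, ?_⟩
    rintro ⟨g₁, g₂⟩ ⟨hg₁, hg₂⟩ x
    obtain ⟨V₂', hV₂', hf₂x, hg₂x⟩ := hg₂ x
    obtain ⟨V₂, hV₂, rfl⟩ := hV₂'
    obtain ⟨V₁, hV₁, hf₁g₂x, hg₁g₂x⟩ := hg₁ (g₂ x)
    obtain ⟨W, hW, hWsub⟩ := hbar (f₁ (g₂ x))
    obtain ⟨U, hU, rfl⟩ := hW
    have hV₁W : V₁ ⊆ U ∩ e '' U := hWsub V₁ hV₁ hf₁g₂x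
    have hV₂W : V₂ ⊆ U ∩ e '' U := hWsub V₂ hV₂ hg₂x
    refine ⟨U, hU, ?_, (hV₁W hg₁g₂x).1⟩
    have hfe : (f₂.trans f₁) x ∈ e '' U := (hV₂W hf₂x).2
    obtain ⟨u, hu, heu⟩ := hfe
    have hux : u = h x := by
      have : (f₂.trans f₁) (h.symm u) = (f₂.trans f₁) x := heu
      have h2 : h.symm u = x := (f₂.trans f₁).injective this
      rw [← h2, Homeomorph.apply_symm_apply]
    rwa [hux] at hu
  · refine continuous_generateFrom_iff.mpr ?_
    rintro S ⟨h, 𝒰, h𝒰, rfl⟩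
    show IsOpen {f : M ≃ₜ M | UNear h f.symm 𝒰}
    apply whitney_isOpen
    intro f hf
    refine ⟨(fun U => h ⁻¹' U ∩ f '' U) '' 𝒰, ⟨?_, ?_⟩, ?_⟩
    · rintro _ ⟨U, hU, rfl⟩
      exact ((h𝒰.1 U hU).preimage h.continuous).inter (f.isOpenMap U (h𝒰.1 U hU))
    · apply eq_univ_of_forall
      intro z
      obtain ⟨U, hU, hhz, hfz⟩ := hf z
      exact ⟨h ⁻¹' U ∩ f '' U, ⟨U, hU, rfl⟩, hhz, ⟨f.symm z, hfz, f.apply_symm_apply z⟩⟩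
    · intro g hg x
      obtain ⟨V, hV, hfy, hgy⟩ := hg (g.symm x)
      obtain ⟨U, hU, rfl⟩ := hV
      rw [g.apply_symm_apply] at hgy
      refine ⟨U, hU, hgy.1, ?_⟩
      obtain ⟨u, hu, huf⟩ := hfy.2
      have : u = g.symm x := f.injective huf
      rwa [this] at hu
end

section
/- For a topological space M and a homeomorphism h of M, the family of sets U(h) = {g ∈ H(M) : (h,g) ≺ U}, where U ranges over open covers of M, is a neighborhood basis at h for the graph topology on H(M) (the topology with subbasic open sets {f : Γ_f ⊆ W} for W open in M × M, where Γ_f is the graph of f). -/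
open Filter Set TopologicalSpace

/-- The graph topology on the homeomorphism group of `M`: generated by the sets
`Γ_W = {f : Γ_f ⊆ W}` for `W` open in `M × M`, where `Γ_f` is the graph of `f`. -/
def graphTop (M : Type*) [TopologicalSpace M] : TopologicalSpace (M ≃ₜ M) :=
  TopologicalSpace.generateFrom
    {S | ∃ W : Set (M × M), IsOpen W ∧ S = {f : M ≃ₜ M | ∀ x, (x, f x) ∈ W}}

theorem mem_graphTop_nhds {M : Type*} [TopologicalSpace M] (h : M ≃ₜ M)
    (t : Set (M ≃ₜ M)) : t ∈ @nhds (M ≃ₜ M) (graphTop M) h ↔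
      ∃ W : Set (M × M), IsOpen W ∧ (∀ x, (x, h x) ∈ W) ∧
        {g : M ≃ₜ M | ∀ x, (x, g x) ∈ W} ⊆ t := by
  rw [graphTop, nhds_generateFrom, Filter.mem_biInf_of_directed]
  · constructor
    · rintro ⟨S, ⟨hS, W, hW, rfl⟩, hSt⟩
      exact ⟨W, hW, hS, hSt⟩
    · rintro ⟨W, hW, hh, hsub⟩
      exact ⟨{g : M ≃ₜ M | ∀ x, (x, g x) ∈ W}, ⟨hh, W, hW, rfl⟩, hsub⟩
  · rintro S₁ ⟨m1, W₁, o1, rfl⟩ S₂ ⟨m2, W₂, o2, rfl⟩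
    refine ⟨{f : M ≃ₜ M | ∀ x, (x, f x) ∈ W₁ ∩ W₂},
      ⟨fun x => ⟨m1 x, m2 x⟩, W₁ ∩ W₂, o1.inter o2, rfl⟩, ?_, ?_⟩
    · exact Filter.principal_mono.2 fun g hg x => (hg x).1
    · exact Filter.principal_mono.2 fun g hg x => (hg x).2
  · exact ⟨{f : M ≃ₜ M | ∀ x, (x, f x) ∈ (univ : Set (M × M))},
      fun _ => trivial, univ, isOpen_univ, rfl⟩

/-- For any topological space `M` and any homeomorphism `h` of `M`, the sets
`𝒰(h) = {g : (h,g) ≺ 𝒰}`, where `𝒰` runs over open covers of `M`, form a neighborhood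
basis at `h` for the graph topology on `H(M)`. -/
theorem graphTop_nhds_basis (M : Type*) [TopologicalSpace M] (h : M ≃ₜ M) :
    (@nhds (M ≃ₜ M) (graphTop M) h).HasBasis _root_.IsOpenCover
      (fun 𝒰 => {g : M ≃ₜ M | UNear h g 𝒰}) := by
  rw [Filter.hasBasis_iff]
  intro t
  rw [mem_graphTop_nhds]
  constructor
  · rintro ⟨W, hW, hh, hsub⟩
    refine ⟨{U : Set M | IsOpen U ∧ ∀ x y, h x ∈ U → y ∈ U → (x, y) ∈ W}, ⟨?_, ?_⟩, ?_⟩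
    · exact fun U hU => hU.1
    · ext z
      simp only [mem_sUnion, mem_univ, iff_true]
      obtain ⟨x, rfl⟩ := h.surjective z
      obtain ⟨A, B, oA, oB, hxA, hxB, hAB⟩ := isOpen_prod_iff.1 hW x (h x) (hh x)
      refine ⟨B ∩ h '' A, ⟨oB.inter (h.isOpenMap A oA), ?_⟩, hxB, ⟨x, hxA, rfl⟩⟩
      rintro x' y ⟨-, a, haA, hax⟩ ⟨hyB, -⟩
      have : x' = a := h.injective hax.symm
      exact hAB ⟨this ▸ haA, hyB⟩
    · intro g hg
      apply hsub
      intro x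
      obtain ⟨U, ⟨-, hU⟩, hhx, hgx⟩ := hg x
      exact hU x (g x) hhx hgx
  · rintro ⟨𝒰, ⟨hopen, hcov⟩, hsub⟩
    refine ⟨⋃ U ∈ 𝒰, (h ⁻¹' U) ×ˢ U, ?_, ?_, ?_⟩
    · exact isOpen_biUnion fun U hU => ((hopen U hU).preimage h.continuous).prod (hopen U hU)
    · intro x
      have : h x ∈ ⋃₀ 𝒰 := hcov ▸ mem_univ _
      obtain ⟨U, hU, hxU⟩ := this
      exact mem_biUnion hU ⟨hxU, hxU⟩
    · intro g hg
      apply hsub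
      intro x
      obtain ⟨_, ⟨U, rfl⟩, _, ⟨hU, rfl⟩, hx1, hx2⟩ := hg x
      exact ⟨U, hU, hx1, hx2⟩
end

section
/- Let M be a paracompact Hausdorff space. Then the identity path-component (indeed the connected component of the identity) of H(M) with the Whitney topology is contained in the subgroup H_c(M) of homeomorphisms with compact support; equivalently, every homeomorphism of M with non-compact support can be separated from id_M by a clopen subset of H(M). -/
open Filter Set TopologicalSpace Topology

/-- In a paracompact Hausdorff space, any set with non-compact closure contains an infinite
(injective) sequence whose every subfamily is closed (a closed discrete subset). -/
lemma aux_exists_seq {M : Type u} [TopologicalSpace M] [ParacompactSpace M] [T2Space M]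
    {A : Set M} (hA : ¬ IsCompact (closure A)) :
    ∃ x : ℕ → M, Function.Injective x ∧ (∀ n, x n ∈ A) ∧ ∀ S : Set ℕ, IsClosed (x '' S) := by
  classical
  obtain ⟨ι, U, hUo, hUc, hUnf⟩ : ∃ (ι : Type u) (U : ι → Set M), (∀ i, IsOpen (U i)) ∧
      (closure A ⊆ ⋃ i, U i) ∧ ∀ t : Finset ι, ¬ closure A ⊆ ⋃ i ∈ t, U i := by
    by_contra hcon
    push_neg at hcon
    exact hA (isCompact_iff_finite_subcover.2 fun {ι} V hVo hVc => hcon ι V hVo hVc)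
  set u : Option ι → Set M := fun o => o.elim (closure A)ᶜ U with hu
  have huo : ∀ o, IsOpen (u o) := by
    rintro (_ | i)
    exacts [isOpen_compl_iff.2 isClosed_closure, hUo i]
  have huc : ⋃ o, u o = univ := by
    apply eq_univ_of_forall; intro z
    by_cases hz : z ∈ closure A
    · obtain ⟨i, hi⟩ := mem_iUnion.1 (hUc hz)
      exact mem_iUnion.2 ⟨some i, hi⟩
    · exact mem_iUnion.2 ⟨none, hz⟩
  obtain ⟨v, hvo, hvc, hvlf, hvu⟩ := precise_refinement u huo huc
  obtain ⟨w, hwc, hwo, hwcl⟩ :=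
    exists_iUnion_eq_closure_subset hvo (fun z => hvlf.point_finite z) hvc
  have hwsub : ∀ i, w i ⊆ v i := fun i => subset_closure.trans (hwcl i)
  have hwlf : LocallyFinite w := hvlf.subset hwsub
  have key : ∀ s : Finset M, (∀ a ∈ s, a ∈ A) →
      ∃ y, y ∈ A ∧ ∀ a ∈ s, ∀ i, a ∈ w i → y ∉ closure (w i) := by
    intro s _
    by_contra hcon
    push_neg at hcon
    set T : Set (Option ι) := {i | ∃ a ∈ s, a ∈ w i} with hT'
    have hT : T.Finite := by
      have hsub : T ⊆ ⋃ a ∈ s, {i | a ∈ w i} := by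
        rintro i ⟨a, ha, haw⟩
        exact mem_iUnion₂.2 ⟨a, ha, haw⟩
      exact (s.finite_toSet.biUnion fun a _ => hwlf.point_finite a).subset hsub
    have hsubcl : closure A ⊆ ⋃ i ∈ T, closure (w i) := by
      refine closure_minimal ?_ (hT.isClosed_biUnion fun i _ => isClosed_closure)
      intro y hy
      obtain ⟨a, ha, i, haw, hycl⟩ := hcon y hy
      exact mem_iUnion₂.2 ⟨i, ⟨a, ha, haw⟩, hycl⟩
    refine hUnf (hT.toFinset.biUnion fun o => o.toFinset) ?_
    intro z hz
    obtain ⟨i, hiT, hzi⟩ := mem_iUnion₂.1 (hsubcl hz)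
    have hzv : z ∈ u i := hvu i ((hwcl i) hzi)
    match i, hiT, hzv with
    | none, _, hzv => exact absurd hz hzv
    | some j, hiT, hzv =>
      refine mem_iUnion₂.2 ⟨j, ?_, hzv⟩
      exact Finset.mem_biUnion.2 ⟨some j, hT.mem_toFinset.2 hiT, by simp⟩
  obtain ⟨x, hxA, hxr⟩ := exists_seq_of_forall_finset_exists (· ∈ A)
    (fun a b => ∀ i, a ∈ w i → b ∉ closure (w i)) key
  have hone : ∀ i m n, x m ∈ w i → x n ∈ w i → m = n := by
    intro i m n hm hn
    rcases lt_trichotomy m n with h | h | h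
    · exact absurd (subset_closure hn) (hxr m n h i hm)
    · exact h
    · exact absurd (subset_closure hm) (hxr n m h i hn)
  have hinj : Function.Injective x := by
    intro m n hmn
    obtain ⟨i, hi⟩ := mem_iUnion.1 (hwc ▸ mem_univ (x m))
    exact hone i m n hi (by rw [hmn] at hi; exact hi)
  refine ⟨x, hinj, hxA, ?_⟩
  intro S
  refine isClosed_of_closure_subset ?_
  intro y hy
  by_contra hy'
  obtain ⟨t0, ht0, htf0⟩ := hwlf y
  set t : Set M := interior t0 with ht'
  have hto : IsOpen t := isOpen_interior
  have hyt : y ∈ t := mem_interior_iff_mem_nhds.2 ht0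
  have htf : {i | (w i ∩ t).Nonempty}.Finite :=
    htf0.subset fun i ⟨z, hz1, hz2⟩ => ⟨z, hz1, interior_subset hz2⟩
  have hfin : {n | x n ∈ t}.Finite := by
    have hsub : {n | x n ∈ t} ⊆ ⋃ i ∈ {i | (w i ∩ t).Nonempty}, {n | x n ∈ w i} := by
      intro n hn
      obtain ⟨i, hi⟩ := mem_iUnion.1 (hwc ▸ mem_univ (x n))
      exact mem_iUnion₂.2 ⟨i, ⟨x n, hi, hn⟩, hi⟩
    refine (htf.biUnion fun i _ => ?_).subset hsub
    exact Set.Subsingleton.finite fun a ha b hb => hone i a b ha hb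
  set F : Set M := (x '' S) ∩ t with hF'
  have hF : F.Finite := by
    refine ((hfin.image x).subset ?_ : _)
    rintro z ⟨⟨n, hnS, rfl⟩, hzt⟩
    exact ⟨n, hzt, rfl⟩
  have hyF : y ∉ F := fun hmem => hy' hmem.1
  have htF : t \ F ∈ 𝓝 y := by
    rw [diff_eq]
    exact inter_mem (hto.mem_nhds hyt) ((hF.isClosed.isOpen_compl).mem_nhds hyF)
  obtain ⟨z, hz1, hz2⟩ := mem_closure_iff_nhds.1 hy (t \ F) htF
  exact hz1.2 ⟨hz2, hz1.1⟩

/-- Shrinking sequence of neighborhoods of a point in a regular space. -/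
lemma aux_shrink {M : Type*} [TopologicalSpace M] [RegularSpace M] (a : M) (U : Set M)
    (hU : IsOpen U) (ha : a ∈ U) :
    ∃ W : ℕ → Set M, W 0 = U ∧ (∀ k, IsOpen (W k)) ∧ (∀ k, a ∈ W k) ∧
      ∀ k, closure (W (k + 1)) ⊆ W k := by
  classical
  have step : ∀ V : Set M, IsOpen V → a ∈ V → ∃ V', IsOpen V' ∧ a ∈ V' ∧ closure V' ⊆ V := by
    intro V hVo haV
    obtain ⟨C, hC𝓝, hCc, hCV⟩ := exists_mem_nhds_isClosed_subset (hVo.mem_nhds haV)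
    exact ⟨interior C, isOpen_interior, mem_interior_iff_mem_nhds.2 hC𝓝,
      (closure_minimal interior_subset hCc).trans hCV⟩
  have step' : ∀ V : Set M, ∃ V', (IsOpen V ∧ a ∈ V) → IsOpen V' ∧ a ∈ V' ∧ closure V' ⊆ V := by
    intro V
    by_cases h : IsOpen V ∧ a ∈ V
    · obtain ⟨V', h1, h2, h3⟩ := step V h.1 h.2
      exact ⟨V', fun _ => ⟨h1, h2, h3⟩⟩
    · exact ⟨∅, fun hh => absurd hh h⟩
  choose f hf using step'
  have main : ∀ k, IsOpen (f^[k] U) ∧ a ∈ f^[k] U := by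
    intro k
    induction k with
    | zero => simpa using ⟨hU, ha⟩
    | succ k ih =>
      rw [Function.iterate_succ_apply']
      exact ⟨(hf _ ih).1, (hf _ ih).2.1⟩
  refine ⟨fun k => f^[k] U, Function.iterate_zero_apply f U, fun k => (main k).1,
    fun k => (main k).2, fun k => ?_⟩
  show closure (f^[k + 1] U) ⊆ f^[k] U
  rw [Function.iterate_succ_apply']
  exact (hf _ (main k)).2.2

/-- Given a closed discrete sequence `x` and open targets `Q n ∋ g (x n)` for `n ∈ S`, there is
an open cover `𝒰` such that every `f` that is `𝒰`-near `g` satisfies `f (x n) ∈ Q n` on `S`. -/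
lemma aux_cover {M : Type*} [TopologicalSpace M] [T1Space M] {x : ℕ → M}
    (hinj : Function.Injective x) (hcl : ∀ S : Set ℕ, IsClosed (x '' S)) (g : M ≃ₜ M)
    (S : Set ℕ) (Q : ℕ → Set M) (hQo : ∀ n ∈ S, IsOpen (Q n))
    (hgQ : ∀ n ∈ S, g (x n) ∈ Q n) :
    ∃ 𝒰 : Set (Set M), IsOpenCover 𝒰 ∧ ∀ f : M ≃ₜ M, UNear g f 𝒰 → ∀ n ∈ S, f (x n) ∈ Q n := by
  classical
  set y : ℕ → M := fun n => g (x n) with hy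
  have hycl : ∀ T : Set ℕ, IsClosed (y '' T) := by
    intro T
    have himg : y '' T = g '' (x '' T) := by rw [image_image]
    rw [himg]
    exact (Homeomorph.isClosedMap g) _ (hcl T)
  have hyinj : Function.Injective y := fun m n hmn => hinj (g.injective hmn)
  set O : ℕ → Set M := fun n => Q n \ (y '' (S \ {n})) with hO
  set 𝒰 : Set (Set M) := insert (y '' S)ᶜ (O '' S) with h𝒰
  have hOn : ∀ n ∈ S, y n ∈ O n := by
    intro n hn
    refine ⟨hgQ n hn, ?_⟩
    rintro ⟨m, hmS, hym⟩
    exact hmS.2 (hyinj hym)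
  refine ⟨𝒰, ⟨?_, ?_⟩, ?_⟩
  · rintro V (rfl | ⟨n, hn, rfl⟩)
    · exact (hycl S).isOpen_compl
    · exact (hQo n hn).sdiff (hycl _)
  · apply eq_univ_of_forall
    intro z
    by_cases hz : z ∈ y '' S
    · obtain ⟨n, hnS, rfl⟩ := hz
      exact mem_sUnion.2 ⟨O n, Or.inr ⟨n, hnS, rfl⟩, hOn n hnS⟩
    · exact mem_sUnion.2 ⟨(y '' S)ᶜ, Or.inl rfl, hz⟩
  · intro f hf n hn
    obtain ⟨V, hV𝒰, hgV, hfV⟩ := hf (x n)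
    rcases hV𝒰 with rfl | ⟨m, hmS, rfl⟩
    · exact absurd (mem_image_of_mem y hn) hgV
    · have hnm : n = m := by
        by_contra hne
        exact hgV.2 ⟨n, ⟨hn, hne⟩, rfl⟩
      rw [← hnm] at hfV
      exact hfV.1

/-- For a paracompact Hausdorff space `M`, the connected component of the identity in
`H(M)` with the Whitney topology consists of compactly supported homeomorphisms;
equivalently, every homeomorphism with non-compact support is separated from the identity
by a clopen subset of `H(M)`. -/
theorem connectedComponent_subset_compactSupport (M : Type*) [TopologicalSpace M]
    [ParacompactSpace M] [T2Space M] :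
    (∀ h : M ≃ₜ M,
      h ∈ @connectedComponent (M ≃ₜ M) (whitney M) (Homeomorph.refl M) →
      IsCompact (closure {x : M | h x ≠ x})) ∧
    (∀ h : M ≃ₜ M, ¬ IsCompact (closure {x : M | h x ≠ x}) →
      ∃ 𝒞 : Set (M ≃ₜ M), @IsClopen (M ≃ₜ M) (whitney M) 𝒞 ∧
        Homeomorph.refl M ∈ 𝒞 ∧ h ∉ 𝒞) := by
  classical
  letI : TopologicalSpace (M ≃ₜ M) := whitney M
  -- every homeomorphism is `𝒰`-near itself for any open cover `𝒰`
  have hself : ∀ (g : M ≃ₜ M) (𝒰 : Set (Set M)), IsOpenCover 𝒰 → UNear g g 𝒰 := by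
    intro g 𝒰 h𝒰 z
    have hz : g z ∈ ⋃₀ 𝒰 := h𝒰.2 ▸ mem_univ _
    obtain ⟨V, hV, hzV⟩ := hz
    exact ⟨V, hV, hzV, hzV⟩
  have hbasic : ∀ (g : M ≃ₜ M) (𝒰 : Set (Set M)), IsOpenCover 𝒰 →
      IsOpen {f : M ≃ₜ M | UNear g f 𝒰} :=
    fun g 𝒰 h𝒰 => isOpen_generateFrom_of_mem ⟨g, 𝒰, h𝒰, rfl⟩
  have key : ∀ h : M ≃ₜ M, ¬ IsCompact (closure {x : M | h x ≠ x}) →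
      ∃ 𝒞 : Set (M ≃ₜ M), IsClopen 𝒞 ∧ Homeomorph.refl M ∈ 𝒞 ∧ h ∉ 𝒞 := by
    intro h hnc
    obtain ⟨x, hinj, hxA, hcl⟩ := aux_exists_seq hnc
    choose W hW0 hWo hWa hWc using fun n =>
      aux_shrink (x n) {h (x n)}ᶜ isOpen_compl_singleton
        (by simpa using (Ne.symm (hxA n) : x n ≠ h (x n)))
    have hWanti : ∀ n, Antitone (W n) := fun n =>
      antitone_nat_of_succ_le fun k => subset_closure.trans (hWc n k)
    set 𝒞 : Set (M ≃ₜ M) := {g | ∀ k : ℕ, ∀ᶠ n in atTop, g (x n) ∈ W n k} with h𝒞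
    have hopen : IsOpen 𝒞 := by
      rw [isOpen_iff_forall_mem_open]
      intro g hg
      simp only [h𝒞, mem_setOf_eq] at hg
      choose N hN using fun k => Filter.eventually_atTop.mp (hg k)
      set N' : ℕ → ℕ := fun k => (Finset.range (k + 1)).sup N with hN'
      have hN'le : ∀ k, N k ≤ N' k := fun k => Finset.le_sup (Finset.self_mem_range_succ k)
      set m : ℕ → ℕ := fun n => Nat.findGreatest (fun k => N' k ≤ n) n with hm
      have hm1 : ∀ n, N' 0 ≤ n → g (x n) ∈ W n (m n) := by
        intro n hn
        have h1 : N' (m n) ≤ n := Nat.findGreatest_spec (P := fun k => N' k ≤ n) (Nat.zero_le n) hn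
        exact hN (m n) n (le_trans (hN'le (m n)) h1)
      have hm2 : ∀ k n, N' k ≤ n → k ≤ n → k ≤ m n := fun k n h1 h2 =>
        Nat.le_findGreatest h2 h1
      obtain ⟨𝒰, h𝒰, hforce⟩ := aux_cover hinj hcl g (Ici (N' 0)) (fun n => W n (m n))
        (fun n _ => hWo n (m n)) (fun n hn => hm1 n hn)
      refine ⟨{f | UNear g f 𝒰}, ?_, hbasic g 𝒰 h𝒰, hself g 𝒰 h𝒰⟩
      intro f hf
      simp only [h𝒞, mem_setOf_eq]
      intro k
      rw [eventually_atTop]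
      refine ⟨max (N' k) (max k (N' 0)), fun n hn => ?_⟩
      have hn0 : N' 0 ≤ n := le_trans (le_max_right _ _) (le_trans (le_max_right _ _) hn)
      have hnk : N' k ≤ n := le_trans (le_max_left _ _) hn
      have hnk' : k ≤ n := le_trans (le_max_left _ _) (le_trans (le_max_right _ _) hn)
      have h1 : f (x n) ∈ W n (m n) := hforce f hf n hn0
      exact hWanti n (hm2 k n hnk hnk') h1
    have hclosed : IsClosed 𝒞 := by
      rw [← isOpen_compl_iff]
      rw [isOpen_iff_forall_mem_open]
      intro g hg
      simp only [h𝒞, mem_compl_iff, mem_setOf_eq, not_forall] at hg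
      obtain ⟨k, hk⟩ := hg
      rw [Filter.not_eventually] at hk
      have hgQ : ∀ n ∈ {n : ℕ | g (x n) ∉ W n k}, g (x n) ∈ (closure (W n (k + 1)))ᶜ :=
        fun n hn hmem => hn (hWc n k hmem)
      obtain ⟨𝒰, h𝒰, hforce⟩ := aux_cover hinj hcl g {n : ℕ | g (x n) ∉ W n k}
        (fun n => (closure (W n (k + 1)))ᶜ) (fun n _ => isClosed_closure.isOpen_compl) hgQ
      refine ⟨{f | UNear g f 𝒰}, ?_, hbasic g 𝒰 h𝒰, hself g 𝒰 h𝒰⟩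
      intro f hf
      simp only [mem_compl_iff, h𝒞, mem_setOf_eq, not_forall]
      refine ⟨k + 1, ?_⟩
      rw [Filter.not_eventually]
      refine hk.mono fun n hn => ?_
      have h1 : f (x n) ∉ closure (W n (k + 1)) := hforce f hf n hn
      exact fun hmem => h1 (subset_closure hmem)
    refine ⟨𝒞, ⟨hclosed, hopen⟩, ?_, ?_⟩
    · intro k
      refine Filter.Eventually.of_forall fun n => ?_
      simpa using hWa n k
    · intro hc
      obtain ⟨n, hn⟩ := (hc 0).exists
      rw [hW0 n] at hn
      exact hn rfl
  refine ⟨?_, key⟩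
  intro h hmem
  by_contra hnc
  obtain ⟨𝒞, hclopen, hid, hh⟩ := key h hnc
  exact hh (hclopen.connectedComponent_subset hid hmem)
end

section
/- Let M be a paracompact Hausdorff space. Then every compact subset K of H_c(M) (with the Whitney topology) has compact total support: the set cl_M(⋃_{h∈K} supp(h)) is compact; consequently K ⊆ H(M, M∖K₀) for some compact K₀ ⊆ M. -/
open Filter Set TopologicalSpace

/-- For a paracompact Hausdorff space `M`, every compact set `K` of compactly supported
homeomorphisms (in the Whitney topology) has compact total support
`cl (⋃_{h∈K} supp h)`; consequently `K ⊆ H(M, M∖K₀)` for some compact `K₀ ⊆ M`. -/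
theorem compact_family_compact_total_support (M : Type*) [TopologicalSpace M]
    [ParacompactSpace M] [T2Space M] (K : Set (M ≃ₜ M))
    (hKc : @IsCompact (M ≃ₜ M) (whitney M) K)
    (hsupp : ∀ h ∈ K, IsCompact (closure {x : M | h x ≠ x})) :
    IsCompact (closure (⋃ h ∈ K, {x : M | h x ≠ x})) ∧
    ∃ K₀ : Set M, IsCompact K₀ ∧ ∀ h ∈ K, ∀ x ∉ K₀, h x = x := by
  classical
  letI 𝒯 : TopologicalSpace (M ≃ₜ M) := whitney M
  set D : Set M := ⋃ h ∈ K, {x : M | h x ≠ x} with hDdef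
  have key : IsCompact (closure D) := by
    by_contra hC
    -- M is nonempty since the empty set is compact
    have hMne : Nonempty M := by
      rcases isEmpty_or_nonempty M with hM | hM
      · exact (hC ((closure D).eq_empty_of_isEmpty ▸ isCompact_empty)).elim
      · exact hM
    -- get an open cover of `closure D` with no finite subcover
    rw [isCompact_iff_finite_subcover] at hC
    push_neg at hC
    obtain ⟨ι, U, hUo, hUcov, hnf⟩ := hC
    set C := closure D with hCdef
    have hCcl : IsClosed C := isClosed_closure
    -- extend to an open cover of M
    set u : Option ι → Set M := fun o => Option.elim o Cᶜ U with hu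
    have huo : ∀ o, IsOpen (u o) := by
      rintro (_ | i)
      · exact hCcl.isOpen_compl
      · exact hUo i
    have hucov : ⋃ o, u o = univ := by
      rw [eq_univ_iff_forall]
      intro y
      by_cases hy : y ∈ C
      · obtain ⟨i, hi⟩ := mem_iUnion.mp (hUcov hy)
        exact mem_iUnion.mpr ⟨some i, hi⟩
      · exact mem_iUnion.mpr ⟨none, hy⟩
    -- locally finite precise refinement
    obtain ⟨v, hvo, hvcov, hvlf, hvu⟩ := precise_refinement u huo hucov
    -- infinitely many members of v meet C
    set T := {o : Option ι | (v o ∩ C).Nonempty} with hT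
    have hTinf : T.Infinite := by
      intro hTfin
      have h1 : C ⊆ ⋃ o ∈ T, v o := by
        intro y hy
        obtain ⟨o, ho⟩ := mem_iUnion.mp (hvcov ▸ mem_univ y)
        exact mem_biUnion ⟨y, ho, hy⟩ ho
      have hSfin : (some ⁻¹' T : Set ι).Finite :=
        hTfin.preimage (fun a _ b _ h => Option.some_injective _ h)
      apply hnf hSfin.toFinset
      intro y hy
      obtain ⟨o, hoT, hov⟩ := mem_iUnion₂.mp (h1 hy)
      have hyu := hvu o hov
      match o with
      | none => exact absurd hy hyu
      | some i =>
        exact mem_biUnion (hSfin.mem_toFinset.mpr hoT) hyu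
    -- choose points of D in those members
    have hpick : ∀ o ∈ T, (v o ∩ D).Nonempty := by
      intro o ho
      obtain ⟨y, hyv, hyC⟩ := ho
      exact _root_.mem_closure_iff.mp hyC (v o) (hvo o) hyv
    choose! p hp using hpick
    set X0 := p '' T with hX0
    have hX0inf : X0.Infinite := by
      intro hfin
      apply hTinf
      have hsub : T ⊆ ⋃ y ∈ X0, {o | o ∈ T ∧ p o = y} := by
        intro o ho
        exact mem_biUnion (mem_image_of_mem p ho) ⟨ho, rfl⟩
      refine Set.Finite.subset (hfin.biUnion fun y _ => ?_) hsub
      refine Set.Finite.subset (hvlf.point_finite y) ?_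
      rintro o ⟨hoT, rfl⟩
      exact (hp o hoT).1
    -- X0 is locally finite as a point set
    have hX0lf : ∀ y : M, ∃ N ∈ nhds y, (X0 ∩ N).Finite := by
      intro y
      obtain ⟨N, hN, hfin⟩ := hvlf y
      refine ⟨N, hN, ?_⟩
      have hsub : X0 ∩ N ⊆ p '' {o | (v o ∩ N).Nonempty} := by
        rintro z ⟨⟨o, hoT, rfl⟩, hzN⟩
        exact mem_image_of_mem p ⟨p o, (hp o hoT).1, hzN⟩
      exact ((hfin.image p).subset hsub)
    -- an injective sequence in X0
    let f : ℕ ↪ X0 := hX0inf.natEmbedding _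
    set x : ℕ → M := fun n => (f n : M) with hx
    have hxinj : Function.Injective x := fun a b hab => f.injective (Subtype.ext hab)
    have hxX0 : ∀ n, x n ∈ X0 := fun n => (f n).2
    have hxD : ∀ n, x n ∈ D := by
      intro n
      obtain ⟨o, hoT, hpo⟩ := hxX0 n
      exact hpo ▸ (hp o hoT).2
    -- index-set local finiteness
    have hXlf : ∀ y : M, ∃ N ∈ nhds y, {n : ℕ | x n ∈ N}.Finite := by
      intro y
      obtain ⟨N, hN, hfin⟩ := hX0lf y
      refine ⟨N, hN, ?_⟩
      have : {n : ℕ | x n ∈ N} = x ⁻¹' (X0 ∩ N) := by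
        ext n; simp only [mem_setOf_eq, mem_preimage, mem_inter_iff, hxX0 n, true_and]
      rw [this]
      exact hfin.preimage (fun a _ b _ h => hxinj h)
    -- every subset of the range of x is closed
    have hclosed : ∀ S : Set M, S ⊆ range x → IsClosed S := by
      intro S hS
      rw [← isOpen_compl_iff, isOpen_iff_mem_nhds]
      intro y hy
      obtain ⟨N, hN, hfin⟩ := hXlf y
      have hfin2 : (S ∩ N).Finite := by
        refine ((hfin.image x).subset ?_)
        rintro z ⟨hzS, hzN⟩
        obtain ⟨n, rfl⟩ := hS hzS
        exact mem_image_of_mem x hzN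
      have hyn : y ∉ S ∩ N := fun h => hy h.1
      refine mem_of_superset (inter_mem hN (hfin2.isClosed.compl_mem_nhds hyn)) ?_
      rintro z ⟨hzN, hz⟩ hzS
      exact hz ⟨hzS, hzN⟩
    -- choose homeomorphisms moving the x n
    have hmove : ∀ n, ∃ h ∈ K, h (x n) ≠ x n := by
      intro n
      have := hxD n
      rw [hDdef] at this
      simpa using this
    choose hh hhK hhne using hmove
    -- the separating open sets
    set Un : ℕ → Set M := fun n => ((range x \ {x n}) ∪ {hh n (x n)})ᶜ with hUn
    have hUno : ∀ n, IsOpen (Un n) :=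
      fun n => (IsClosed.union (hclosed _ diff_subset) isClosed_singleton).isOpen_compl
    have hmemUn : ∀ n, x n ∈ Un n := by
      intro n
      rintro (⟨-, h⟩ | h)
      · exact h rfl
      · exact hhne n h.symm
    have hUn_mem : ∀ m n, x m ∈ Un n → m = n := by
      intro m n hmem
      by_contra hne
      refine hmem (Or.inl ⟨mem_range_self m, fun h => hne (hxinj ?_)⟩)
      simpa using h
    have hUn_h : ∀ n, hh n (x n) ∉ Un n := fun n hmem => hmem (Or.inr rfl)
    -- for each g ∈ K, only finitely many x n are moved
    choose N hN hNfin using hXlf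
    have hF : ∀ g ∈ K, {n : ℕ | g (x n) ≠ x n}.Finite := by
      intro g hg
      set Y : Set M := range x ∩ closure {z | g z ≠ z} with hY
      have hYc : IsCompact Y :=
        (hsupp g hg).of_isClosed_subset (hclosed Y inter_subset_left) inter_subset_right
      obtain ⟨t, -, hcover⟩ := hYc.elim_nhds_subcover N (fun y _ => hN y)
      have hYfin : Y.Finite := by
        have hsub : Y ⊆ ⋃ y ∈ t, x '' {n | x n ∈ N y} := by
          intro z hz
          obtain ⟨y, hyt, hzN⟩ := mem_iUnion₂.mp (hcover hz)
          obtain ⟨n, rfl⟩ := hz.1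
          exact mem_biUnion hyt (mem_image_of_mem x hzN)
        exact Set.Finite.subset (t.finite_toSet.biUnion fun y _ => (hNfin y).image x) hsub
      have hsub : {n : ℕ | g (x n) ≠ x n} ⊆ x ⁻¹' Y :=
        fun n hn => ⟨mem_range_self n, subset_closure hn⟩
      exact ((hYfin.preimage (fun a _ b _ h => hxinj h)).subset hsub)
    -- Whitney open covers
    set 𝒰 : (M ≃ₜ M) → Set (Set M) :=
      fun g => insert ((x '' {n | g (x n) = x n})ᶜ) (Un '' {n | g (x n) = x n}) with h𝒰
    have hcov𝒰 : ∀ g, IsOpenCover (𝒰 g) := by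
      intro g
      constructor
      · intro U hU
        rcases Set.mem_insert_iff.mp hU with rfl | ⟨n, hn, rfl⟩
        · exact (hclosed _ (image_subset_range x _)).isOpen_compl
        · exact hUno n
      · rw [eq_univ_iff_forall]
        intro y
        rw [mem_sUnion]
        by_cases hy : y ∈ x '' {n | g (x n) = x n}
        · obtain ⟨n, hn, rfl⟩ := hy
          exact ⟨Un n, Set.mem_insert_iff.mpr (Or.inr (mem_image_of_mem Un hn)), hmemUn n⟩
        · exact ⟨_, Set.mem_insert_iff.mpr (Or.inl rfl), hy⟩
    -- Whitney-open neighborhoods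
    set Ng : (M ≃ₜ M) → Set (M ≃ₜ M) := fun g => {g' | UNear g g' (𝒰 g)} with hNgdef
    have hNgo : ∀ g, IsOpen (Ng g) := by
      intro g
      exact TopologicalSpace.isOpen_generateFrom_of_mem ⟨g, 𝒰 g, hcov𝒰 g, rfl⟩
    have hNgmem : ∀ g, g ∈ Ng g := by
      intro g z
      have hz : g z ∈ ⋃₀ 𝒰 g := by rw [(hcov𝒰 g).2]; trivial
      obtain ⟨U, hU, hzU⟩ := hz
      exact ⟨U, hU, hzU, hzU⟩
    -- finite subcover of K
    obtain ⟨t, ht⟩ := hKc.elim_finite_subcover (fun g : K => Ng g) (fun g => hNgo g)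
      (fun g hg => mem_iUnion.mpr ⟨⟨g, hg⟩, hNgmem g⟩)
    have hFfin : (⋃ g ∈ t, {n : ℕ | (g : M ≃ₜ M) (x n) ≠ x n}).Finite :=
      t.finite_toSet.biUnion fun g _ => hF g g.2
    obtain ⟨n, hn⟩ := hFfin.infinite_compl.nonempty
    obtain ⟨g, hgt, hgnear⟩ := mem_iUnion₂.mp (ht (hhK n))
    have hgfix : (g : M ≃ₜ M) (x n) = x n := by
      by_contra hne
      exact hn (mem_biUnion hgt hne)
    obtain ⟨U, hU, hgU, hhU⟩ := hgnear (x n)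
    rw [hgfix] at hgU
    rcases Set.mem_insert_iff.mp hU with rfl | ⟨m, hm, rfl⟩
    · exact hgU (mem_image_of_mem x (show n ∈ {k | (g : M ≃ₜ M) (x k) = x k} from hgfix))
    · have hnm : n = m := hUn_mem n m hgU
      subst hnm
      exact hUn_h n hhU
  refine ⟨key, closure D, key, fun h hhK x hx => ?_⟩
  by_contra hne
  exact hx (subset_closure (mem_biUnion hhK hne))
end

section
/- A regular space that is the union of countably many subspaces, each of which is second countable in the subspace topology, and in which every compact subset is contained in one of these subspaces, is an ℵ₀-space (possesses a countable k-network). -/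
open Filter Set TopologicalSpace

/-- A regular space which is a countable union of second-countable subspaces such that
every compact subset is contained in one of them is an `ℵ₀`-space: it has a countable
`k`-network. -/
theorem aleph0_space_of_countable_union (X : Type*) [TopologicalSpace X]
    [RegularSpace X] (Xn : ℕ → Set X)
    (hcover : ⋃ n, Xn n = Set.univ)
    (hsc : ∀ n, SecondCountableTopology (Xn n))
    (hcpt : ∀ K : Set X, IsCompact K → ∃ n, K ⊆ Xn n) :
    ∃ N : Set (Set X), N.Countable ∧
      ∀ U : Set X, IsOpen U → ∀ K : Set X, IsCompact K → K ⊆ U →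
        ∃ F : Set (Set X), F ⊆ N ∧ F.Finite ∧ K ⊆ ⋃₀ F ∧ ⋃₀ F ⊆ U := by
  classical
  refine ⟨⋃ n, (fun B : Set (Xn n) => (Subtype.val '' B : Set X)) ''
      countableBasis (Xn n), ?_, ?_⟩
  · exact countable_iUnion fun n => (countable_countableBasis (Xn n)).image _
  · intro U hU K hK hKU
    obtain ⟨n, hKn⟩ := hcpt K hK
    set K' : Set (Xn n) := Subtype.val ⁻¹' K with hK'def
    have hK' : IsCompact K' := by
      rw [Topology.IsEmbedding.subtypeVal.isCompact_iff]
      rwa [Subtype.image_preimage_coe, Set.inter_eq_right.mpr hKn]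
    set U' : Set (Xn n) := Subtype.val ⁻¹' U with hU'def
    have hU' : IsOpen U' := hU.preimage continuous_subtype_val
    have hKU' : K' ⊆ U' := fun x hx => hKU hx
    set ι := {B : Set (Xn n) // B ∈ countableBasis (Xn n) ∧ B ⊆ U'}
    have hcov : K' ⊆ ⋃ i : ι, (i : Set (Xn n)) := by
      intro x hx
      obtain ⟨B, hB, hxB, hBU⟩ :=
        (isBasis_countableBasis (Xn n)).exists_subset_of_mem_open (hKU' hx) hU'
      exact mem_iUnion.2 ⟨⟨B, hB, hBU⟩, hxB⟩
    obtain ⟨t, ht⟩ := hK'.elim_finite_subcover (fun i : ι => (i : Set (Xn n)))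
      (fun i => (isBasis_countableBasis (Xn n)).isOpen i.2.1) hcov
    refine ⟨(fun i : ι => (Subtype.val '' (i : Set (Xn n)) : Set X)) '' (t : Set ι),
      ?_, (t.finite_toSet).image _, ?_, ?_⟩
    · rintro S ⟨i, -, rfl⟩
      exact mem_iUnion.2 ⟨n, ⟨i, i.2.1, rfl⟩⟩
    · intro x hx
      have hxn : x ∈ Xn n := hKn hx
      have : (⟨x, hxn⟩ : Xn n) ∈ K' := hx
      obtain ⟨i, hit, hxi⟩ := mem_iUnion₂.1 (ht this)
      exact ⟨Subtype.val '' (i : Set (Xn n)), ⟨i, hit, rfl⟩, ⟨_, hxi, rfl⟩⟩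
    · rintro x ⟨S, ⟨i, -, rfl⟩, ⟨y, hy, rfl⟩⟩
      exact i.2.2 hy
end

section
/- Let G be a topological group equal to the union of an increasing sequence of subgroups (G_n)_{n∈ω}, such that the multiplication map p : ⊡_{n∈ω} G_n → G admits a local section at the identity. If each G_n is locally contractible, then G is locally contractible. -/
open Filter Set TopologicalSpace Topology

/-- A space is locally contractible if every point has arbitrarily small neighborhoods
that contract within any prescribed neighborhood. -/
def LocallyContractible (X : Type*) [TopologicalSpace X] : Prop :=
  ∀ x : X, ∀ U ∈ nhds x, ∃ V ∈ nhds x, V ⊆ U ∧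
    ∃ φ : V × unitInterval → X, Continuous φ ∧
      (∀ (v : V) (t : unitInterval), φ (v, t) ∈ U) ∧
      (∀ v : V, φ (v, 0) = v) ∧ ∃ c : X, ∀ v : V, φ (v, 1) = c


section Aux
variable {G : Type*} [Group G] [TopologicalSpace G] [IsTopologicalGroup G]

private lemma SBaux.exists_half (S : Set G) : ∃ S' : Set G,
    S ∈ nhds 1 → (S' ∈ nhds 1 ∧ ∀ a ∈ S', ∀ b ∈ S', a * b ∈ S) := by
  by_cases h : S ∈ nhds 1
  · obtain ⟨V, hV, hVS⟩ := exists_nhds_one_split h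
    exact ⟨V, fun _ => ⟨hV, hVS⟩⟩
  · exact ⟨∅, fun h' => absurd h' h⟩

/-- an iterated-halving chain starting at a given neighborhood of 1 -/
private lemma SBaux.chain_exists (S : Set G) (hS : S ∈ nhds 1) :
    ∃ C : ℕ → Set G, C 0 = S ∧ (∀ j, C j ∈ nhds 1) ∧
      ∀ j, ∀ a ∈ C (j+1), ∀ b ∈ C (j+1), a * b ∈ C j := by
  choose f hf using SBaux.exists_half (G := G)
  refine ⟨fun n => f^[n] S, rfl, ?_, ?_⟩
  · have key : ∀ n, f^[n] S ∈ nhds 1 := by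
      intro n
      induction n with
      | zero => exact hS
      | succ k ih => rw [Function.iterate_succ_apply']; exact (hf _ ih).1
    exact key
  · intro j a ha b hb
    replace ha : a ∈ f^[j+1] S := ha
    replace hb : b ∈ f^[j+1] S := hb
    show a * b ∈ f^[j] S
    have hj : f^[j] S ∈ nhds 1 := by
      clear ha hb
      induction j with
      | zero => exact hS
      | succ k ih => rw [Function.iterate_succ_apply']; exact (hf _ ih).1
    have := (hf _ hj).2
    rw [Function.iterate_succ_apply'] at ha hb
    exact this a ha b hb

private lemma SBaux.chain_prod {C : ℕ → Set G} (hC1 : ∀ j, (1:G) ∈ C j)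
    (hCm : ∀ j, ∀ a ∈ C (j+1), ∀ b ∈ C (j+1), a * b ∈ C j) :
    ∀ (m j : ℕ) (c : ℕ → G), (∀ i < m, c i ∈ C (j+i+1)) →
      ((List.range m).map c).prod ∈ C j := by
  intro m
  induction m with
  | zero => intro j c _; simpa using hC1 j
  | succ k ih =>
    intro j c hc
    rw [List.range_succ_eq_map]
    simp only [List.map_cons, List.map_map, List.prod_cons]
    have h0 : c 0 ∈ C (j+1) := by simpa using hc 0 (Nat.succ_pos _)
    have hrest : ((List.range k).map (c ∘ Nat.succ)).prod ∈ C (j+1) := by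
      apply ih (j+1) (c ∘ Nat.succ)
      intro i hi
      have := hc (i+1) (by omega)
      simpa [Function.comp, Nat.add_assoc, Nat.add_comm, Nat.add_left_comm] using this
    have hsub : C (j+1+1) ⊆ C (j+1) := by
      intro a ha
      have := hCm (j+1) a ha 1 (hC1 _)
      simpa using this
    exact hCm j _ h0 _ hrest

private lemma SBaux.cont_list_prod {X : Type*} [TopologicalSpace X] (g : ℕ → X → G)
    (hg : ∀ n, Continuous (g n)) (K : ℕ) :
    Continuous (fun x => ((List.range K).map (fun n => g n x)).prod) := by
  induction K with
  | zero => simpa using continuous_const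
  | succ k ih =>
    have heq : (fun x => ((List.range (k+1)).map (fun n => g n x)).prod)
        = fun x => ((List.range k).map (fun n => g n x)).prod * g k x := by
      funext x; rw [List.range_succ]; simp
    rw [heq]; exact ih.mul (hg k)

private lemma SBaux.prod_translate (a e : ℕ → G) : ∀ K : ℕ,
    ((List.range K).map (fun n => a n * e n)).prod =
      ((List.range K).map (fun n => ((List.range (n+1)).map a).prod * e n *
        (((List.range (n+1)).map a).prod)⁻¹)).prod * ((List.range K).map a).prod := by
  intro K
  induction K with
  | zero => simp
  | succ k ih =>
    have h1 : ∀ f : ℕ → G, ∀ k : ℕ, ((List.range (k+1)).map f).prod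
        = ((List.range k).map f).prod * f k := by
      intro f k; rw [List.range_succ]; simp
    rw [h1 (fun n => a n * e n) k,
        h1 (fun n => ((List.range (n+1)).map a).prod * e n *
          (((List.range (n+1)).map a).prod)⁻¹) k, h1 a k, ih]
    group

private lemma SBaux.pointed_contraction {H : Type*} [Group H] [TopologicalSpace H]
    [IsTopologicalGroup H] (hlc : LocallyContractible H) {W : Set H} (hW : W ∈ nhds 1) :
    ∃ D ∈ nhds (1:H), ∃ η : D × unitInterval → H,
      Continuous η ∧ (∀ d t, η (d, t) ∈ W) ∧ (∀ d, η (d, 0) = (d:H)) ∧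
      (∀ (d : D) (t : unitInterval), (d:H) = 1 → η (d, t) = 1) ∧ (∀ d, η (d, 1) = 1) ∧
      (∀ Q ∈ nhds (1:H), ∃ R ∈ nhds (1:H), ∀ (d : D), (d:H) ∈ R →
        ∀ t, η (d, t) ∈ Q) := by
  -- W' with a⁻¹ * b ∈ W
  have hcont : Tendsto (fun q : H × H => q.1⁻¹ * q.2) (nhds ((1:H),(1:H))) (nhds 1) := by
    have h : Continuous fun q : H × H => q.1⁻¹ * q.2 :=
      (continuous_fst.inv).mul continuous_snd
    exact h.tendsto' _ _ (by simp)
  have hpre : (fun q : H × H => q.1⁻¹ * q.2) ⁻¹' W ∈ nhds ((1:H),(1:H)) := hcont hW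
  rw [nhds_prod_eq, Filter.mem_prod_iff] at hpre
  obtain ⟨W1, hW1, W2, hW2, hW12⟩ := hpre
  set W' := W1 ∩ W2 with hW'def
  have hW' : W' ∈ nhds (1:H) := inter_mem hW1 hW2
  have hW'prop : ∀ a ∈ W', ∀ b ∈ W', a⁻¹ * b ∈ W := by
    intro a ha b hb
    exact hW12 (Set.mk_mem_prod ha.1 hb.2)
  obtain ⟨V, hV, hVsub, φ, hφc, hφU, hφ0, c, hφ1⟩ := hlc 1 W' hW'
  have h1V : (1:H) ∈ V := mem_of_mem_nhds hV
  set one : V := ⟨1, h1V⟩ with hone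
  refine ⟨V, hV, fun x => (φ (one, x.2))⁻¹ * φ x, ?_, ?_, ?_, ?_, ?_, ?_⟩
  · exact ((hφc.comp (continuous_const.prodMk continuous_snd)).inv).mul hφc
  · intro d t; exact hW'prop _ (hφU one t) _ (hφU d t)
  · intro d; simp [hφ0 one, hφ0 d]; rfl
  · intro d t hd
    have : d = one := Subtype.ext (by simp [hd, hone])
    rw [this]; simp
  · intro d; simp [hφ1 one, hφ1 d]
  · intro Q hQ
    -- tube lemma
    set Φ : V × unitInterval → H := fun x => (φ (one, x.2))⁻¹ * φ x with hΦ
    have hΦc : Continuous Φ :=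
      ((hφc.comp (continuous_const.prodMk continuous_snd)).inv).mul hφc
    have hΦ1 : ∀ t, Φ (one, t) = 1 := by intro t; simp [hΦ]
    have hopen : IsOpen (Φ ⁻¹' interior Q) := (isOpen_interior).preimage hΦc
    have hsub : ({one} : Set V) ×ˢ (univ : Set unitInterval) ⊆ Φ ⁻¹' interior Q := by
      rintro ⟨d, t⟩ ⟨hd, -⟩
      simp only [mem_singleton_iff] at hd
      subst hd
      simp [mem_preimage, hΦ1, mem_interior_iff_mem_nhds, hQ]
    obtain ⟨u, v, hu, hv, hsu, hsv, huv⟩ :=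
      generalized_tube_lemma isCompact_singleton isCompact_univ hopen hsub
    obtain ⟨T, hT, hTeq⟩ := isOpen_induced_iff.mp hu
    refine ⟨T, hT.mem_nhds ?_, ?_⟩
    · have : one ∈ u := hsu rfl
      rw [← hTeq] at this; exact this
    · intro d hd t
      have hdu : d ∈ u := by rw [← hTeq]; exact hd
      have : (d, t) ∈ u ×ˢ (v : Set unitInterval) := ⟨hdu, hsv (mem_univ t)⟩
      exact interior_subset (huv this)

private lemma SBaux.cont_comp {α β γ : Type*} {tα : TopologicalSpace α}
    {tβ : TopologicalSpace β} {tγ : TopologicalSpace γ} {f : α → β} {g : β → γ}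
    (hg : @Continuous β γ tβ tγ g) (hf : @Continuous α β tα tβ f) :
    @Continuous α γ tα tγ (fun x => g (f x)) :=
  ⟨fun s hs => hf.isOpen_preimage _ (hg.isOpen_preimage s hs)⟩

private lemma SBaux.isOpen_pre {α β : Type*} {tα : TopologicalSpace α}
    {tβ : TopologicalSpace β} {f : α → β} (hf : @Continuous α β tα tβ f)
    {s : Set β} (hs : IsOpen[tβ] s) : IsOpen[tα] (f ⁻¹' s) := hf.isOpen_preimage s hs

private lemma SBaux.isOpen_induced' {α β : Type*} {tβ : TopologicalSpace β} {f : α → β}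
    {s : Set β} (hs : IsOpen[tβ] s) : IsOpen[tβ.induced f] (f ⁻¹' s) := ⟨s, hs, rfl⟩

end Aux

/-- Let `G` be a topological group which is the union of an increasing sequence of
subgroups `(Gₙ)` such that the multiplication map `p : ⊡ₙ Gₙ → G` admits a local section
at the identity.  If each `Gₙ` is locally contractible, then `G` is locally
contractible. -/
theorem locallyContractible_of_smallBox_section (G : Type*) [Group G]
    [TopologicalSpace G] [IsTopologicalGroup G] (Gn : ℕ → Subgroup G)
    (hmono : Monotone Gn) (hunion : ∀ g : G, ∃ n, g ∈ Gn n)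
    (p : {x : ∀ _ : ℕ, G // (∀ n, x n ∈ Gn n) ∧ ∀ᶠ n in Filter.atTop, x n = 1} → G)
    (hp : ∀ x, ∀ N : ℕ, (∀ n, N ≤ n → x.val n = 1) →
      p x = ((List.range N).map x.val).prod)
    (hsec : ∃ V ∈ nhds (1 : G),
      ∃ s : V → {x : ∀ _ : ℕ, G // (∀ n, x n ∈ Gn n) ∧ ∀ᶠ n in Filter.atTop, x n = 1},
        @Continuous _ _ inferInstance ((boxTop fun _ : ℕ => G).induced Subtype.val) s ∧
        ∀ v : V, p (s v) = v)
    (hlc : ∀ n, LocallyContractible (Gn n)) :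
    LocallyContractible G := by
  have key : ∀ U ∈ nhds (1:G), ∃ Vb ∈ nhds (1:G), Vb ⊆ U ∧
      ∃ φ : Vb × unitInterval → G, Continuous φ ∧
        (∀ (v : Vb) (t : unitInterval), φ (v, t) ∈ U) ∧
        (∀ v : Vb, φ (v, 0) = v) ∧ ∃ c : G, ∀ v : Vb, φ (v, 1) = c := by
    intro U hU
    obtain ⟨V, hV, s, hs_cont, hs_sec⟩ := hsec
    -- the halving chain below U
    obtain ⟨E, hE0, hEnhds, hEmul⟩ := SBaux.chain_exists U hU
    -- basic box topology facts
    have hbox_open : ∀ Uu : ∀ _ : ℕ, Set G, (∀ n, IsOpen (Uu n)) →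
        IsOpen[boxTop fun _ : ℕ => G] (univ.pi Uu) :=
      fun Uu hUu => TopologicalSpace.GenerateOpen.basic _ ⟨Uu, hUu, rfl⟩
    have hbox_eval : ∀ n : ℕ, @Continuous (∀ _ : ℕ, G) G (boxTop fun _ : ℕ => G) _
        (fun x => x n) := by
      intro n
      rw [continuous_def]
      intro W hW
      have hset : (fun x : ∀ _ : ℕ, G => x n) ⁻¹' W
          = univ.pi (fun m => if m = n then W else univ) := by
        ext x
        simp only [mem_preimage, mem_univ_pi]
        constructor
        · intro h m
          by_cases hm : m = n
          · subst hm; simp [h]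
          · simp [hm]
        · intro h
          have := h n
          simpa using this
      rw [hset]
      refine hbox_open _ (fun m => ?_)
      by_cases hm : m = n
      · rw [if_pos hm]; exact hW
      · rw [if_neg hm]; exact isOpen_univ
    have hcoordS : ∀ n : ℕ, @Continuous _ G
        ((boxTop fun _ : ℕ => G).induced Subtype.val) _
        (fun x : {x : ∀ _ : ℕ, G // (∀ n, x n ∈ Gn n) ∧ ∀ᶠ n in Filter.atTop, x n = 1} =>
          x.val n) :=
      fun n => SBaux.cont_comp (hbox_eval n) continuous_induced_dom
    -- the base point of the section and its support bound
    set v1 : V := ⟨1, mem_of_mem_nhds hV⟩ with hv1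
    set x0 := s v1 with hx0
    obtain ⟨N, hN⟩ := eventually_atTop.mp x0.2.2
    have hPK : ∀ K, N ≤ K → ((List.range K).map x0.val).prod = 1 := by
      intro K hK
      have h1 : p x0 = ((List.range K).map x0.val).prod :=
        hp x0 K (fun n hn => hN n (hK.trans hn))
      have h2 : p x0 = 1 := by
        have := hs_sec v1
        rw [← hx0] at this
        simpa [hv1] using this
      rw [← h1, h2]
    -- conjugated neighborhoods
    set Fc : ℕ → Set G := fun n => (fun g : G => ((List.range (n+1)).map x0.val).prod * g *
        (((List.range (n+1)).map x0.val).prod)⁻¹) ⁻¹' (E (n+1)) with hFc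
    have hF : ∀ n, Fc n ∈ nhds (1:G) := by
      intro n
      apply ContinuousAt.preimage_mem_nhds
        (((continuous_const.mul continuous_id).mul continuous_const).continuousAt)
      simpa using hEnhds (n+1)
    have hval_tendsto : ∀ n, Tendsto (Subtype.val : ↥(Gn n) → G) (nhds 1) (nhds 1) := by
      intro n
      have := continuous_subtype_val.continuousAt (x := (1 : ↥(Gn n)))
      exact this
    -- pointed contractions in each Gn
    have hctr : ∀ n : ℕ, ∃ D ∈ nhds (1 : ↥(Gn n)), ∃ η : D × unitInterval → ↥(Gn n),
        Continuous η ∧ (∀ d t, η (d, t) ∈ (Subtype.val ⁻¹' Fc n : Set ↥(Gn n))) ∧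
        (∀ d, η (d, 0) = (d : ↥(Gn n))) ∧
        (∀ (d : D) (t : unitInterval), (d : ↥(Gn n)) = 1 → η (d, t) = 1) ∧
        (∀ d, η (d, 1) = 1) ∧
        (∀ Q ∈ nhds (1 : ↥(Gn n)), ∃ R ∈ nhds (1 : ↥(Gn n)), ∀ (d : D),
          (d : ↥(Gn n)) ∈ R → ∀ t, η (d, t) ∈ Q) :=
      fun n => SBaux.pointed_contraction (hlc n) (hval_tendsto n (hF n))
    choose D hD η hηc hηW hη0 hηfix hη1 hηmod using hctr
    -- open G-neighborhoods inside the domains D n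
    have hD'ex : ∀ n, ∃ T : Set G, IsOpen T ∧ (1:G) ∈ T ∧
        (Subtype.val ⁻¹' T : Set ↥(Gn n)) ⊆ D n := by
      intro n
      have hDn := hD n
      rw [nhds_subtype] at hDn
      obtain ⟨T, hT, hTsub⟩ := Filter.mem_comap.mp hDn
      refine ⟨interior T, isOpen_interior, ?_, fun x hx => hTsub (interior_subset (s := T) hx)⟩
      rw [mem_interior_iff_mem_nhds]
      simpa using hT
    choose D' hD'o hD'1 hD'sub using hD'ex
    -- the box neighborhood of x0
    set O : ℕ → Set G := fun n => (fun g : G => (x0.val n)⁻¹ * g) ⁻¹' D' n with hO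
    have hOopen : ∀ n, IsOpen (O n) :=
      fun n => (hD'o n).preimage (continuous_const.mul continuous_id)
    have hOx0 : ∀ n, x0.val n ∈ O n := by
      intro n
      show (x0.val n)⁻¹ * x0.val n ∈ D' n
      simpa using hD'1 n
    have hSopen : IsOpen (s ⁻¹' (Subtype.val ⁻¹' (univ.pi O))) :=
      SBaux.isOpen_pre hs_cont (SBaux.isOpen_induced' (hbox_open O hOopen))
    obtain ⟨T, hTopen, hTeq⟩ := isOpen_induced_iff.mp hSopen
    have h1T : (1:G) ∈ T := by
      have hv1mem : v1 ∈ s ⁻¹' (Subtype.val ⁻¹' (univ.pi O)) := by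
        intro n _
        exact hOx0 n
      rw [← hTeq] at hv1mem
      exact hv1mem
    -- the neighborhood of 1 carrying the contraction
    refine ⟨T ∩ (V ∩ U), inter_mem (hTopen.mem_nhds h1T) (inter_mem hV hU),
      fun x hx => hx.2.2, ?_⟩
    set Vb := T ∩ (V ∩ U) with hVb
    set q : Vb → V := fun v => ⟨v.val, v.2.2.1⟩ with hq
    have hq_cont : Continuous q := continuous_subtype_val.subtype_mk _
    set sv : Vb → {x : ∀ _ : ℕ, G // (∀ n, x n ∈ Gn n) ∧ ∀ᶠ n in Filter.atTop, x n = 1} :=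
      fun v => s (q v) with hsv
    have hsv_cont : @Continuous _ _ _ ((boxTop fun _ : ℕ => G).induced Subtype.val) sv :=
      SBaux.cont_comp hs_cont hq_cont
    have hsvO : ∀ (v : Vb) (n : ℕ), (sv v).val n ∈ O n := by
      intro v n
      have hvT : q v ∈ Subtype.val ⁻¹' T := v.2.1
      rw [hTeq] at hvT
      exact hvT n (mem_univ n)
    -- the coordinatewise data
    set dd : ∀ n : ℕ, Vb → ↥(D n) := fun n v =>
      ⟨⟨(x0.val n)⁻¹ * (sv v).val n, mul_mem (inv_mem (x0.2.1 n)) ((sv v).2.1 n)⟩,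
        hD'sub n (hsvO v n)⟩ with hdd
    have hdd_cont : ∀ n, Continuous (dd n) := by
      intro n
      apply Continuous.subtype_mk
      apply Continuous.subtype_mk
      exact continuous_const.mul (SBaux.cont_comp (hcoordS n) hsv_cont)
    set e : ℕ → Vb × unitInterval → G :=
      fun n vt => ((η n (dd n vt.1, vt.2) : ↥(Gn n)) : G) with he
    have he_cont : ∀ n, Continuous (e n) := by
      intro n
      exact continuous_subtype_val.comp ((hηc n).comp
        (((hdd_cont n).comp continuous_fst).prodMk continuous_snd))
    set y : Vb × unitInterval → ℕ → G := fun vt n => x0.val n * e n vt with hy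
    have hyGn : ∀ vt n, y vt n ∈ Gn n :=
      fun vt n => mul_mem (x0.2.1 n) (η n (dd n vt.1, vt.2)).2
    choose Msup hMsup using fun v : Vb => eventually_atTop.mp (sv v).2.2
    have hy1 : ∀ (vt : Vb × unitInterval) (n : ℕ), max N (Msup vt.1) ≤ n → y vt n = 1 := by
      intro vt n hn
      have hx0n : x0.val n = 1 := hN n (le_trans (le_max_left _ _) hn)
      have hsvn : (sv vt.1).val n = 1 := hMsup vt.1 n (le_trans (le_max_right _ _) hn)
      have hdval : ((dd n vt.1 : ↥(Gn n)) : G) = 1 := by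
        show (x0.val n)⁻¹ * (sv vt.1).val n = 1
        rw [hx0n, hsvn]; simp
      have hd1 : (dd n vt.1 : ↥(Gn n)) = 1 := by
        apply Subtype.ext
        simpa using hdval
      have hη := hηfix n (dd n vt.1) vt.2 hd1
      show x0.val n * e n vt = 1
      have : e n vt = 1 := by
        show ((η n (dd n vt.1, vt.2) : ↥(Gn n)) : G) = 1
        rw [hη]; simp
      rw [hx0n, this, mul_one]
    set yel : Vb × unitInterval →
        {x : ∀ _ : ℕ, G // (∀ n, x n ∈ Gn n) ∧ ∀ᶠ n in Filter.atTop, x n = 1} :=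
      fun vt => ⟨y vt, fun n => hyGn vt n,
        eventually_atTop.mpr ⟨max N (Msup vt.1), fun n hn => hy1 vt n hn⟩⟩ with hyel
    have hφK : ∀ (vt : Vb × unitInterval) (K : ℕ), max N (Msup vt.1) ≤ K →
        p (yel vt) = ((List.range K).map (y vt)).prod :=
      fun vt K hK => hp (yel vt) K (fun n hn => hy1 vt n (le_trans hK hn))
    refine ⟨fun vt => p (yel vt), ?_, ?_, ?_, ⟨1, ?_⟩⟩
    · -- continuity
      rw [continuous_iff_continuousAt]
      rintro ⟨v0, t0⟩
      set K0 := max N (Msup v0) with hK0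
      set A : Vb × unitInterval → G := fun vt => ((List.range K0).map (y vt)).prod with hA
      have hAc : Continuous A := by
        apply SBaux.cont_list_prod (fun n vt => y vt n)
        intro n
        exact continuous_const.mul (he_cont n)
      set B : Vb × unitInterval → G := fun vt => (A vt)⁻¹ * p (yel vt) with hB
      have hABφ : (fun vt : Vb × unitInterval => p (yel vt)) = fun vt => A vt * B vt := by
        funext vt
        show p (yel vt) = A vt * ((A vt)⁻¹ * p (yel vt))
        rw [mul_inv_cancel_left]
      have hB0 : B (v0, t0) = 1 := by
        show (A (v0, t0))⁻¹ * p (yel (v0, t0)) = 1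
        rw [hφK (v0, t0) K0 le_rfl]
        have hAval : A (v0, t0) = ((List.range K0).map (y (v0, t0))).prod := rfl
        rw [← hAval]
        group
      have hBtend : Tendsto B (nhds (v0, t0)) (nhds 1) := by
        rw [Filter.tendsto_def]
        intro Q hQ
        obtain ⟨Qc, hQc0, hQcn, hQcmul⟩ := SBaux.chain_exists Q hQ
        have hmod : ∀ n : ℕ, ∃ R' : Set G, IsOpen R' ∧ (1:G) ∈ R' ∧
            ∀ d : ↥(D n), ((d : ↥(Gn n)) : G) ∈ R' → ∀ t : unitInterval,
              ((η n (d, t) : ↥(Gn n)) : G) ∈ Qc (n - K0 + 1) := by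
          intro n
          have hQ' : (Subtype.val ⁻¹' (Qc (n - K0 + 1)) : Set ↥(Gn n)) ∈ nhds 1 :=
            hval_tendsto n (hQcn _)
          obtain ⟨R, hR, hRp⟩ := hηmod n _ hQ'
          rw [nhds_subtype] at hR
          obtain ⟨T', hT', hT'sub⟩ := Filter.mem_comap.mp hR
          refine ⟨interior T', isOpen_interior, ?_, ?_⟩
          · rw [mem_interior_iff_mem_nhds]
            simpa using hT'
          · intro d hd t
            exact hRp d (hT'sub (interior_subset (s := T') hd)) t
        choose R' hR'o hR'1 hR'p using hmod
        set O' : ℕ → Set G := fun n =>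
          if n < K0 then univ else (fun g : G => (x0.val n)⁻¹ * g) ⁻¹' R' n with hO'
        have hO'open : ∀ n, IsOpen (O' n) := by
          intro n
          show IsOpen (if n < K0 then univ else (fun g : G => (x0.val n)⁻¹ * g) ⁻¹' R' n)
          by_cases hn : n < K0
          · rw [if_pos hn]; exact isOpen_univ
          · rw [if_neg hn]
            exact (hR'o n).preimage (continuous_const.mul continuous_id)
        have hWopen : IsOpen (sv ⁻¹' (Subtype.val ⁻¹' (univ.pi O'))) :=
          SBaux.isOpen_pre hsv_cont (SBaux.isOpen_induced' (hbox_open O' hO'open))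
        have hv0W : v0 ∈ sv ⁻¹' (Subtype.val ⁻¹' (univ.pi O')) := by
          intro n _
          show (sv v0).val n ∈ if n < K0 then univ
            else (fun g : G => (x0.val n)⁻¹ * g) ⁻¹' R' n
          by_cases hn : n < K0
          · rw [if_pos hn]; exact mem_univ _
          · rw [if_neg hn]
            have hnK : K0 ≤ n := le_of_not_gt hn
            have h1 : (sv v0).val n = 1 := hMsup v0 n (le_trans (le_max_right _ _) hnK)
            have h2 : x0.val n = 1 := hN n (le_trans (le_max_left _ _) hnK)
            show (x0.val n)⁻¹ * (sv v0).val n ∈ R' n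
            rw [h1, h2]
            simpa using hR'1 n
        have hprodmem : (sv ⁻¹' (Subtype.val ⁻¹' (univ.pi O'))) ×ˢ (univ : Set unitInterval)
            ∈ nhds (v0, t0) := prod_mem_nhds (hWopen.mem_nhds hv0W) univ_mem
        apply mem_of_superset hprodmem
        rintro ⟨v, t⟩ ⟨hvW, -⟩
        show B (v, t) ∈ Q
        set K := max K0 (max N (Msup v)) with hK
        have hφv : p (yel (v, t)) = ((List.range K).map (y (v, t))).prod :=
          hφK (v, t) K (le_max_right _ _)
        obtain ⟨m, hm⟩ : ∃ m, K = K0 + m := ⟨K - K0, by omega⟩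
        have hBval : B (v, t) =
            ((List.range m).map (fun j => y (v, t) (K0 + j))).prod := by
          show (A (v, t))⁻¹ * p (yel (v, t)) = _
          rw [hφv, hm, List.range_add, List.map_append, List.prod_append, List.map_map]
          have hAval : ((List.range K0).map (y (v, t))).prod = A (v, t) := rfl
          rw [hAval, inv_mul_cancel_left]
          rfl
        rw [hBval, ← hQc0]
        refine SBaux.chain_prod (fun j => mem_of_mem_nhds (hQcn j)) hQcmul m 0 _ ?_
        intro i hi
        have hni : K0 ≤ K0 + i := Nat.le_add_right _ _
        have hx0i : x0.val (K0 + i) = 1 := hN _ (le_trans (le_max_left _ _) hni)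
        have hsvmem : (sv v).val (K0 + i) ∈ O' (K0 + i) := hvW (K0 + i) (mem_univ _)
        have hRmem : ((dd (K0 + i) v : ↥(Gn (K0 + i))) : G) ∈ R' (K0 + i) := by
          have hnlt : ¬ (K0 + i < K0) := by omega
          show (x0.val (K0 + i))⁻¹ * (sv v).val (K0 + i) ∈ R' (K0 + i)
          have hsvmem' : (sv v).val (K0 + i) ∈ if K0 + i < K0 then univ
              else (fun g : G => (x0.val (K0 + i))⁻¹ * g) ⁻¹' R' (K0 + i) := hsvmem
          rw [if_neg hnlt] at hsvmem'
          exact hsvmem'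
        have hterm := hR'p (K0 + i) (dd (K0 + i) v) hRmem t
        have harith : (K0 + i) - K0 + 1 = 0 + i + 1 := by omega
        show y (v, t) (K0 + i) ∈ Qc (0 + i + 1)
        have hyval : y (v, t) (K0 + i) = ((η (K0 + i) (dd (K0 + i) v, t) : ↥(Gn (K0 + i))) : G) := by
          show x0.val (K0 + i) * e (K0 + i) (v, t) = _
          rw [hx0i, one_mul]
        rw [hyval, ← harith]
        exact hterm
      have hmul : Tendsto (fun vt : Vb × unitInterval => A vt * B vt)
          (nhds (v0, t0)) (nhds (A (v0, t0) * 1)) :=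
        Filter.Tendsto.mul (hAc.continuousAt : Tendsto A (nhds (v0, t0)) _) hBtend
      rw [mul_one] at hmul
      have h2 : ContinuousAt (fun vt : Vb × unitInterval => A vt * B vt) (v0, t0) := by
        have h3 : Tendsto (fun vt : Vb × unitInterval => A vt * B vt)
            (nhds (v0, t0)) (nhds (A (v0, t0) * B (v0, t0))) := by
          rw [hB0, mul_one]
          exact hmul
        exact h3
      rw [hABφ]
      exact h2
    · -- stays in U
      intro v t
      show p (yel (v, t)) ∈ U
      rw [hφK (v, t) (max N (Msup v)) le_rfl]
      have hylam : y (v, t) = fun n => x0.val n * e n (v, t) := rfl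
      rw [hylam, SBaux.prod_translate x0.val (fun n => e n (v, t)) (max N (Msup v)),
        hPK (max N (Msup v)) (le_max_left _ _), mul_one, ← hE0]
      refine SBaux.chain_prod (fun j => mem_of_mem_nhds (hEnhds j)) hEmul (max N (Msup v)) 0 _ ?_
      intro i hi
      have h2 : ((List.range (i+1)).map x0.val).prod * e i (v, t) *
          (((List.range (i+1)).map x0.val).prod)⁻¹ ∈ E (i+1) := hηW i (dd i v) t
      have harith : i + 1 = 0 + i + 1 := by omega
      rw [← harith]
      exact h2
    · -- starts at v
      intro v
      show p (yel (v, 0)) = v.val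
      have hyeq : yel (v, 0) = s (q v) := by
        apply Subtype.ext
        funext n
        show x0.val n * e n (v, 0) = (s (q v)).val n
        have he0 : e n (v, 0) = (x0.val n)⁻¹ * (sv v).val n := by
          show ((η n (dd n v, 0) : ↥(Gn n)) : G) = _
          rw [hη0 n (dd n v)]
        rw [he0, mul_inv_cancel_left]
      rw [hyeq]
      exact hs_sec (q v)
    · -- ends at 1
      intro v
      show p (yel (v, 1)) = 1
      have hyeq : yel (v, 1) = x0 := by
        apply Subtype.ext
        funext n
        show x0.val n * e n (v, 1) = x0.val n
        have he1 : e n (v, 1) = 1 := by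
          show ((η n (dd n v, 1) : ↥(Gn n)) : G) = 1
          rw [hη1 n (dd n v)]
          simp
        rw [he1, mul_one]
      rw [hyeq]
      have := hs_sec v1
      rw [← hx0] at this
      simpa [hv1] using this
  -- reduce to the identity by homogeneity
  intro g U hU
  have hmulg : Continuous fun x : G => g * x := continuous_const.mul continuous_id
  have hU' : (fun x : G => g * x) ⁻¹' U ∈ nhds (1:G) := by
    apply hmulg.continuousAt.preimage_mem_nhds
    simpa using hU
  obtain ⟨V', hV', hV'sub, φ', hφ'c, hφ'U, hφ'0, c', hφ'1⟩ := key _ hU'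
  have hmulginv : Continuous fun x : G => g⁻¹ * x := continuous_const.mul continuous_id
  refine ⟨(fun x : G => g⁻¹ * x) ⁻¹' V', ?_, ?_,
    fun vt => g * φ' (⟨g⁻¹ * vt.1.val, vt.1.2⟩, vt.2), ?_, ?_, ?_, ⟨g * c', ?_⟩⟩
  · apply hmulginv.continuousAt.preimage_mem_nhds
    simpa using hV'
  · intro x hx
    have := hV'sub hx
    simpa using this
  · exact continuous_const.mul (hφ'c.comp
      (((continuous_const.mul (continuous_subtype_val.comp continuous_fst)).subtype_mk
        _).prodMk continuous_snd))
  · intro v t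
    exact hφ'U ⟨g⁻¹ * v.val, v.2⟩ t
  · intro v
    show g * φ' (⟨g⁻¹ * v.val, v.2⟩, 0) = ↑v
    rw [hφ'0 ⟨g⁻¹ * v.val, v.2⟩]
    simp
  · intro v
    show g * φ' (⟨g⁻¹ * v.val, v.2⟩, 1) = g * c'
    rw [hφ'1 ⟨g⁻¹ * v.val, v.2⟩]
end

section
/- Let G be a paracompact topological group equal to the union of an increasing sequence of subgroups (G_n)_{n∈ω} with a continuous multiplication map p : ⊡_{n∈ω} G_n → G admitting a local section at the identity, and let H ≤ G be a subgroup. If H ∩ G_n is homotopy dense in G_n for each n, then H is homotopy dense in G. -/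
set_option linter.unusedSectionVars false
set_option maxHeartbeats 1000000

open Filter Set TopologicalSpace Topology


/-- A subset `A` of a space `X` is homotopy dense if there is a homotopy `φₜ : X → X`
with `φ₀ = id` and `φₜ(X) ⊆ A` for `t ∈ (0,1]`. -/
def HomotopyDense {X : Type*} [TopologicalSpace X] (A : Set X) : Prop :=
  ∃ φ : X × unitInterval → X, Continuous φ ∧ (∀ x, φ (x, 0) = x) ∧
    ∀ x t, t ≠ 0 → φ (x, t) ∈ A

theorem aux_normal {X : Type*} [TopologicalSpace X] [RegularSpace X] [ParacompactSpace X] :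
    NormalSpace X := by
  refine ⟨fun s t hs ht hst => ?_⟩
  have H : ∀ x ∈ s, ∃ u v : Set X, IsOpen u ∧ IsOpen v ∧ x ∈ u ∧ t ⊆ v ∧ Disjoint u v := by
    intro x hx
    have hd : Disjoint (𝓝 x) (𝓝ˢ t) := by
      rw [disjoint_nhds_nhdsSet, ht.closure_eq]
      exact fun hxt => hst.le_bot ⟨hx, hxt⟩
    rcases ((nhds_basis_opens x).disjoint_iff (hasBasis_nhdsSet t)).1 hd with
      ⟨u, ⟨hxu, huo⟩, v, ⟨hvo, htv⟩, huv⟩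
    exact ⟨u, v, huo, hvo, hxu, htv, huv⟩
  choose u v hu hv hxu htv huv using SetCoe.forall'.1 H
  rcases precise_refinement_set hs u hu (fun x hx => mem_iUnion.2 ⟨⟨x, hx⟩, hxu _⟩) with
    ⟨u', hu'o, hcov', hu'fin, hsub⟩
  refine ⟨⋃ i, u' i, (closure (⋃ i, u' i))ᶜ, isOpen_iUnion hu'o, isClosed_closure.isOpen_compl,
    hcov', ?_, disjoint_compl_right.mono le_rfl (compl_le_compl subset_closure)⟩
  rw [hu'fin.closure_iUnion, compl_iUnion, subset_iInter_iff]
  refine fun i x hxt hxu =>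
    absurd (htv i hxt) (closure_minimal ?_ (isClosed_compl_iff.2 <| hv _) hxu)
  exact fun y hyu hyv => (huv i).le_bot ⟨hsub _ hyu, hyv⟩



noncomputable section GlueSec

variable {G : Type*} [Group G] [TopologicalSpace G] [IsTopologicalGroup G]
variable {ι : Type*}

/-- sum of weights over a list -/
def lsum (lam : ι → G → ℝ) (l : List ι) (x : G) : ℝ := (l.map fun i => lam i x).sum

/-- clamped time -/
def tau (t : unitInterval) (c : ℝ) : unitInterval := Set.projIcc 0 1 zero_le_one (t.1 * c)

lemma tau_zero (c : ℝ) : tau 0 c = 0 := by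
  simp [tau, Set.projIcc]

lemma tau_zero' (t : unitInterval) : tau t 0 = 0 := by
  simp [tau, Set.projIcc]

lemma tau_ne_zero {t : unitInterval} (ht : t ≠ 0) {c : ℝ} (hc : 0 < c) : tau t c ≠ 0 := by
  have ht' : 0 < (t : ℝ) := lt_of_le_of_ne t.2.1 (by
    intro h; exact ht (by ext; exact h.symm))
  have : 0 < (t : ℝ) * c := mul_pos ht' hc
  intro h
  have h1 : (tau t c : ℝ) = 0 := by rw [h]; rfl
  have h2 : (0 : ℝ) < (tau t c : ℝ) := by
    show (0:ℝ) < max 0 (min 1 ((t:ℝ)*c))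
    exact lt_max_of_lt_right (lt_min (by norm_num) this)
  exact absurd h1 (ne_of_gt h2)

lemma continuous_tau : Continuous fun q : unitInterval × ℝ => tau q.1 q.2 :=
  continuous_projIcc.comp ((continuous_subtype_val.comp continuous_fst).mul continuous_snd)

/-- The glued homotopy along a list of indices. -/
def glue (u : ι → G × unitInterval → G) (lam : ι → G → ℝ) : List ι → G × unitInterval → G
  | [], q => q.1
  | (j :: l), q =>
      u j (q.1, tau q.2 (lsum lam (j :: l) q.1)) * (u j (q.1, tau q.2 (lsum lam l q.1)))⁻¹ *
        glue u lam l q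

omit [TopologicalSpace G] [IsTopologicalGroup G] in
lemma glue_zero (u : ι → G × unitInterval → G) (lam : ι → G → ℝ) (l : List ι) (x : G) :
    glue u lam l (x, 0) = x := by
  induction l with
  | nil => rfl
  | cons j l ih => simp [glue, tau_zero, ih]

end GlueSec

section GlueSec2
open scoped Classical

variable {G : Type*} [Group G] [TopologicalSpace G] [IsTopologicalGroup G]
variable {ι : Type*} (u : ι → G × unitInterval → G) (lam : ι → G → ℝ)

omit [TopologicalSpace G] [IsTopologicalGroup G] in
lemma lsum_cons (j : ι) (l : List ι) (x : G) :
    lsum lam (j :: l) x = lam j x + lsum lam l x := by simp [lsum]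

omit [TopologicalSpace G] [IsTopologicalGroup G] in
lemma lsum_filter (l : List ι) (x : G) :
    lsum lam (l.filter fun i => lam i x ≠ 0) x = lsum lam l x := by
  induction l with
  | nil => rfl
  | cons j l ih =>
    by_cases h : lam j x ≠ 0
    · rw [List.filter_cons_of_pos (by simpa using h), lsum_cons, lsum_cons, ih]
    · rw [List.filter_cons_of_neg (by simpa using h), lsum_cons, ih]
      push_neg at h
      rw [h, zero_add]

omit [TopologicalSpace G] [IsTopologicalGroup G] in
lemma glue_filter (l : List ι) (x : G) (t : unitInterval) :
    glue u lam l (x, t) = glue u lam (l.filter fun i => lam i x ≠ 0) (x, t) := by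
  induction l with
  | nil => rfl
  | cons j l ih =>
    by_cases h : lam j x ≠ 0
    · rw [List.filter_cons_of_pos (by simpa using h)]
      show _ = u j (x, tau t (lsum lam (j :: l.filter fun i => lam i x ≠ 0) x)) *
          (u j (x, tau t (lsum lam (l.filter fun i => lam i x ≠ 0) x)))⁻¹ *
          glue u lam (l.filter fun i => lam i x ≠ 0) (x, t)
      rw [lsum_cons, lsum_filter, ← lsum_cons, ← ih]
      rfl
    · rw [List.filter_cons_of_neg (by simpa using h)]
      push_neg at h
      show u j (x, tau t (lsum lam (j :: l) x)) * (u j (x, tau t (lsum lam l x)))⁻¹ *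
          glue u lam l (x,t) = _
      rw [lsum_cons, h, zero_add, mul_inv_cancel, one_mul, ih]

omit [TopologicalSpace G] [IsTopologicalGroup G] in
lemma glue_aux_mem (H : Subgroup G) (l : List ι) (x : G) (t : unitInterval) (ht : t ≠ 0)
    (hmem : ∀ i ∈ l, ∀ t' : unitInterval, t' ≠ 0 → u i (x, t') ∈ H)
    (h0 : ∀ i ∈ l, u i (x, 0) = x)
    (hnn : ∀ i ∈ l, 0 ≤ lam i x)
    (j : ι) (hjmem : ∀ t' : unitInterval, t' ≠ 0 → u j (x, t') ∈ H) (hj0 : u j (x, 0) = x) :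
    (u j (x, tau t (lsum lam l x)))⁻¹ * glue u lam l (x, t) ∈ H := by
  induction l generalizing j with
  | nil =>
    show (u j (x, tau t (lsum lam [] x)))⁻¹ * x ∈ H
    have : lsum lam ([] : List ι) x = 0 := rfl
    rw [this, tau_zero', hj0, inv_mul_cancel]
    exact H.one_mem
  | cons j' l ih =>
    have key : (u j (x, tau t (lsum lam (j'::l) x)))⁻¹ * glue u lam (j'::l) (x, t)
        = ((u j (x, tau t (lsum lam (j'::l) x)))⁻¹ * u j' (x, tau t (lsum lam (j'::l) x))) *
          ((u j' (x, tau t (lsum lam l x)))⁻¹ * glue u lam l (x, t)) := by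
      show _ * (u j' (x, tau t (lsum lam (j'::l) x)) * (u j' (x, tau t (lsum lam l x)))⁻¹ *
          glue u lam l (x,t)) = _
      group
    rw [key]
    refine H.mul_mem ?_ (ih (fun i hi => hmem i (List.mem_cons_of_mem _ hi))
      (fun i hi => h0 i (List.mem_cons_of_mem _ hi))
      (fun i hi => hnn i (List.mem_cons_of_mem _ hi)) j'
      (hmem j' (List.mem_cons_self)) (h0 j' (List.mem_cons_self)))
    rcases eq_or_lt_of_le (show (0:ℝ) ≤ lsum lam (j'::l) x by
      simp only [lsum]
      exact List.sum_nonneg (by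
        intro a ha
        simp only [List.mem_map] at ha
        obtain ⟨i, hi, rfl⟩ := ha
        exact hnn i hi)) with hz | hp
    · rw [← hz, tau_zero', hj0, h0 j' (List.mem_cons_self), inv_mul_cancel]
      exact H.one_mem
    · exact H.mul_mem (H.inv_mem (hjmem _ (tau_ne_zero ht hp)))
        (hmem j' (List.mem_cons_self) _ (tau_ne_zero ht hp))

omit [TopologicalSpace G] [IsTopologicalGroup G] in
lemma glue_mem (H : Subgroup G) (l : List ι) (x : G) (t : unitInterval) (ht : t ≠ 0)
    (hmem : ∀ i ∈ l, ∀ t' : unitInterval, t' ≠ 0 → u i (x, t') ∈ H)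
    (h0 : ∀ i ∈ l, u i (x, 0) = x)
    (hnn : ∀ i ∈ l, 0 ≤ lam i x)
    (hpos : 0 < lsum lam l x) :
    glue u lam l (x, t) ∈ H := by
  cases l with
  | nil => exact absurd hpos (by simp [lsum])
  | cons j l =>
    show u j (x, tau t (lsum lam (j::l) x)) * (u j (x, tau t (lsum lam l x)))⁻¹ *
        glue u lam l (x,t) ∈ H
    rw [mul_assoc]
    refine H.mul_mem (hmem j (List.mem_cons_self) _ (tau_ne_zero ht hpos)) ?_
    exact glue_aux_mem u lam H l x t ht (fun i hi => hmem i (List.mem_cons_of_mem _ hi))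
      (fun i hi => h0 i (List.mem_cons_of_mem _ hi))
      (fun i hi => hnn i (List.mem_cons_of_mem _ hi)) j
      (hmem j (List.mem_cons_self)) (h0 j (List.mem_cons_self))

lemma glue_continuousOn (l : List ι) (W : Set G)
    (hu : ∀ i ∈ l, ContinuousOn (u i) (W ×ˢ (univ : Set unitInterval)))
    (hlam : ∀ i ∈ l, Continuous (lam i)) :
    ContinuousOn (glue u lam l) (W ×ˢ (univ : Set unitInterval)) := by
  induction l with
  | nil => exact continuousOn_fst
  | cons j l ih =>
    have hls : ∀ l' : List ι, (∀ i ∈ l', Continuous (lam i)) →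
        Continuous fun x : G => lsum lam l' x := by
      intro l' h
      induction l' with
      | nil => simpa [lsum] using continuous_const
      | cons a l'' ih' =>
        have : (fun x : G => lsum lam (a :: l'') x)
            = fun x => lam a x + lsum lam l'' x := by
          funext x; exact lsum_cons lam a l'' x
        rw [this]
        exact (h a (List.mem_cons_self)).add
          (ih' fun i hi => h i (List.mem_cons_of_mem _ hi))
    have hcomp : ∀ l' : List ι, (∀ i ∈ l', Continuous (lam i)) →
        ContinuousOn (fun q : G × unitInterval => (q.1, tau q.2 (lsum lam l' q.1)))
          (W ×ˢ (univ : Set unitInterval)) ∧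
        MapsTo (fun q : G × unitInterval => (q.1, tau q.2 (lsum lam l' q.1)))
          (W ×ˢ (univ : Set unitInterval)) (W ×ˢ (univ : Set unitInterval)) := by
      intro l' h
      constructor
      · exact (continuous_fst.prodMk (continuous_tau.comp
          (continuous_snd.prodMk ((hls l' h).comp continuous_fst)))).continuousOn
      · intro q hq
        exact ⟨hq.1, mem_univ _⟩
    refine ContinuousOn.mul (ContinuousOn.mul ?_ (ContinuousOn.inv ?_)) ?_
    · exact (hu j (List.mem_cons_self)).comp (hcomp (j::l) hlam).1 (hcomp (j::l) hlam).2
    · exact (hu j (List.mem_cons_self)).comp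
        (hcomp l fun i hi => hlam i (List.mem_cons_of_mem _ hi)).1
        (hcomp l fun i hi => hlam i (List.mem_cons_of_mem _ hi)).2
    · exact ih (fun i hi => hu i (List.mem_cons_of_mem _ hi))
        (fun i hi => hlam i (List.mem_cons_of_mem _ hi))

end GlueSec2

section GlueMain
open scoped Classical

variable {G : Type*} [Group G] [TopologicalSpace G] [IsTopologicalGroup G]
variable {ι : Type*}

omit [Group G] [IsTopologicalGroup G] in
lemma finset_sort_map_sum [LinearOrder ι] (S : Finset ι) (f : ι → ℝ) :
    ((S.sort (·≤·)).map f).sum = ∑ i ∈ S, f i := by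
  rw [List.Perm.sum_eq ((Finset.sort_perm_toList (r := (·≤·)) S).map f)]
  exact Finset.sum_map_toList S f

theorem glue_homotopyDense [ParacompactSpace G] [NormalSpace G] [LinearOrder ι] (H : Subgroup G)
    (U : ι → Set G) (hUo : ∀ i, IsOpen (U i)) (hUc : (univ : Set G) ⊆ ⋃ i, U i)
    (u : ι → G × unitInterval → G)
    (huc : ∀ i, ContinuousOn (u i) (U i ×ˢ (univ : Set unitInterval)))
    (hu0 : ∀ i, ∀ x ∈ U i, u i (x, 0) = x)
    (huH : ∀ i, ∀ x ∈ U i, ∀ t : unitInterval, t ≠ 0 → u i (x, t) ∈ H) :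
    HomotopyDense (H : Set G) := by
  obtain ⟨ρ, hρ⟩ := PartitionOfUnity.exists_isSubordinate isClosed_univ U hUo hUc
  set lam : ι → G → ℝ := fun i x => ρ i x with hlam_def
  have hUx : ∀ (x : G) (i : ι), lam i x ≠ 0 → x ∈ U i := fun x i h =>
    hρ i (subset_closure (Function.mem_support.2 h))
  set L : G → List ι := fun x => (ρ.finsupport x).sort (·≤·) with hL_def
  have hmemL : ∀ (x : G) (i : ι), i ∈ L x ↔ lam i x ≠ 0 := by
    intro x i
    rw [hL_def, Finset.mem_sort, ρ.mem_finsupport, Function.mem_support]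
  have hsumL : ∀ x : G, lsum lam (L x) x = 1 := by
    intro x
    show ((((ρ.finsupport x).sort (·≤·))).map fun i => lam i x).sum = 1
    rw [finset_sort_map_sum]
    exact ρ.sum_finsupport (mem_univ x)
  refine ⟨fun q => glue u lam (L q.1) q, ?_, ?_, ?_⟩
  · -- continuity
    rw [continuous_iff_continuousAt]
    rintro ⟨x₀, t₀⟩
    obtain ⟨M, hM, hMfin⟩ := ρ.locallyFinite_tsupport x₀
    set T : Finset ι := hMfin.toFinset with hT_def
    set S₀ : Finset ι := T.filter (fun i => x₀ ∈ tsupport (ρ i)) with hS₀_def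
    set N : Set G := interior M ∩ (⋂ i ∈ S₀, U i) ∩
        (⋂ i ∈ (T \ S₀ : Finset ι), (tsupport (ρ i))ᶜ) with hN_def
    have hNopen : IsOpen N := by
      refine (isOpen_interior.inter (isOpen_biInter_finset fun i _ => hUo i)).inter
        (isOpen_biInter_finset fun i _ => (isClosed_closure).isOpen_compl)
    have hx₀N : x₀ ∈ N := by
      refine ⟨⟨mem_interior_iff_mem_nhds.2 hM, ?_⟩, ?_⟩
      · exact mem_iInter₂.2 fun i hi => hρ i (Finset.mem_filter.1 hi).2
      · exact mem_iInter₂.2 fun i hi => by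
          have := Finset.mem_sdiff.1 hi
          simpa using (fun h => this.2 (Finset.mem_filter.2 ⟨this.1, h⟩))
    have hNsub : ∀ x ∈ N, ∀ i : ι, lam i x ≠ 0 → i ∈ S₀ := by
      intro x hx i hi
      have hxM : x ∈ M := interior_subset hx.1.1
      have hiT : i ∈ T := by
        rw [hT_def, Set.Finite.mem_toFinset]
        exact ⟨x, subset_closure (Function.mem_support.2 hi), hxM⟩
      by_contra hiS
      have : x ∈ (tsupport (ρ i))ᶜ :=
        mem_iInter₂.1 hx.2 i (Finset.mem_sdiff.2 ⟨hiT, hiS⟩)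
      exact this (subset_closure (Function.mem_support.2 hi))
    have hNU : ∀ i ∈ S₀, N ⊆ U i := fun i hi x hx => mem_iInter₂.1 hx.1.2 i hi
    set L₀ : List ι := S₀.sort (·≤·) with hL₀_def
    have hLeq : ∀ x ∈ N, L x = L₀.filter (fun i => lam i x ≠ 0) := by
      intro x hx
      refine List.Perm.eq_of_pairwise' (Finset.pairwise_sort _ _)
        ((Finset.pairwise_sort S₀ (·≤·)).filter _) ?_
      refine (List.perm_ext_iff_of_nodup (Finset.sort_nodup _ _)
        ((Finset.sort_nodup S₀ (·≤·)).filter _)).2 fun i => ?_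
      rw [List.mem_filter]
      constructor
      · intro hiL
        have h1 : lam i x ≠ 0 := (hmemL x i).1 hiL
        exact ⟨(Finset.mem_sort _).2 (hNsub x hx i h1), by simpa using h1⟩
      · rintro ⟨-, h2⟩
        exact (hmemL x i).2 (by simpa using h2)
    have hglueeq : ∀ q ∈ N ×ˢ (univ : Set unitInterval),
        glue u lam (L q.1) q = glue u lam L₀ q := by
      rintro ⟨x, t⟩ ⟨hx, -⟩
      rw [hLeq x hx, ← glue_filter]
    have hcont : ContinuousOn (glue u lam L₀) (N ×ˢ (univ : Set unitInterval)) := by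
      refine glue_continuousOn u lam L₀ N (fun i hi => (huc i).mono ?_)
        (fun i _ => (ρ i).continuous)
      exact prod_mono_left (hNU i ((Finset.mem_sort _).1 hi))
    have hcontφ : ContinuousOn (fun q : G × unitInterval => glue u lam (L q.1) q)
        (N ×ˢ (univ : Set unitInterval)) := hcont.congr hglueeq
    exact hcontφ.continuousAt ((hNopen.prod isOpen_univ).mem_nhds ⟨hx₀N, mem_univ _⟩)
  · intro x
    exact glue_zero u lam (L x) x
  · intro x t ht
    refine glue_mem u lam H (L x) x t ht ?_ ?_ ?_ ?_
    · exact fun i hi t' ht' => huH i x (hUx x i ((hmemL x i).1 hi)) t' ht'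
    · exact fun i hi => hu0 i x (hUx x i ((hmemL x i).1 hi))
    · exact fun i _ => ρ.nonneg i x
    · rw [hsumL x]; norm_num

end GlueMain



/-- Type synonym for `ℕ → G` with the box topology. -/
def BoxPi (G : Type*) : Type _ := ℕ → G

instance (G : Type*) [TopologicalSpace G] : TopologicalSpace (BoxPi G) := boxTop fun _ => G

/-- The small box product of the subgroups `Gn`. -/
def SBox (G : Type*) [Group G] (Gn : ℕ → Subgroup G) : Type _ :=
  {x : ∀ _ : ℕ, G // (∀ n, x n ∈ Gn n) ∧ ∀ᶠ n in Filter.atTop, x n = 1}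

namespace SBox

variable {G : Type*} [Group G] {Gn : ℕ → Subgroup G}

def val (z : SBox G Gn) : BoxPi G := Subtype.val z

lemma prop (z : SBox G Gn) : (∀ n, z.val n ∈ Gn n) ∧ ∀ᶠ n in Filter.atTop, z.val n = 1 :=
  Subtype.prop z

def mk (x : ℕ → G) (h : (∀ n, x n ∈ Gn n) ∧ ∀ᶠ n in Filter.atTop, x n = 1) : SBox G Gn :=
  Subtype.mk x h

@[simp] lemma val_mk (x : ℕ → G) (h) : (mk (Gn := Gn) x h).val = x := rfl

@[ext] lemma ext {z w : SBox G Gn} (h : ∀ n, z.val n = w.val n) : z = w :=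
  Subtype.ext (funext h)

end SBox

instance (G : Type*) [Group G] [TopologicalSpace G] (Gn : ℕ → Subgroup G) :
    TopologicalSpace (SBox G Gn) :=
  TopologicalSpace.induced (SBox.val : SBox G Gn → BoxPi G) inferInstance

section BoxLemmas

variable {G : Type*} [Group G] [TopologicalSpace G]

lemma isOpen_boxPi {U : ℕ → Set G} (hU : ∀ n, IsOpen (U n)) :
    IsOpen {x : BoxPi G | ∀ n, x n ∈ U n} := by
  have : {x : BoxPi G | ∀ n, x n ∈ U n} = Set.univ.pi U := by
    ext x; exact ⟨fun h' n _ => h' n, fun h' n => h' n trivial⟩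
  rw [this]
  exact TopologicalSpace.isOpen_generateFrom_of_mem ⟨U, hU, rfl⟩

lemma continuous_sbox_val {Gn : ℕ → Subgroup G} :
    Continuous (SBox.val : SBox G Gn → BoxPi G) := continuous_induced_dom

lemma isOpen_sbox_pi {Gn : ℕ → Subgroup G} {U : ℕ → Set G} (hU : ∀ n, IsOpen (U n)) :
    IsOpen {z : SBox G Gn | ∀ n, z.val n ∈ U n} :=
  (isOpen_boxPi hU).preimage continuous_sbox_val

lemma continuous_boxPi_rng {X : Type*} [TopologicalSpace X] {f : X → BoxPi G}
    (h : ∀ U : ℕ → Set G, (∀ n, IsOpen (U n)) → IsOpen {x : X | ∀ n, f x n ∈ U n}) :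
    Continuous f := by
  have : Continuous[_, boxTop fun _ : ℕ => G] f := by
    rw [boxTop]; refine continuous_generateFrom_iff.2 ?_
    rintro S ⟨U, hU, rfl⟩
    have : f ⁻¹' Set.univ.pi U = {x : X | ∀ n, f x n ∈ U n} := by
      ext x; exact ⟨fun h' n => h' n trivial, fun h' n _ => h' n⟩
    refine (congrArg IsOpen this).mpr ?_
    exact h U hU
  exact this

lemma continuous_sbox_rng {Gn : ℕ → Subgroup G} {X : Type*} [TopologicalSpace X]
    {f : X → SBox G Gn}
    (h : ∀ U : ℕ → Set G, (∀ n, IsOpen (U n)) → IsOpen {x : X | ∀ n, (f x).val n ∈ U n}) :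
    Continuous f :=
  continuous_induced_rng.2 (continuous_boxPi_rng h)

end BoxLemmas

section Phi

variable {G : Type*} [Group G] [TopologicalSpace G] {Gn : ℕ → Subgroup G}
variable (ψ : ∀ n, ↥(Gn n) × unitInterval → ↥(Gn n))

/-- Coordinatewise application of the homotopies `ψ n`. -/
def PhiFun (h1 : ∀ n t, ψ n (1, t) = 1) (q : SBox G Gn × unitInterval) : SBox G Gn :=
  SBox.mk (fun n => (ψ n (⟨q.1.val n, (SBox.prop q.1).1 n⟩, q.2) : G))
    ⟨fun n => (ψ n (⟨q.1.val n, (SBox.prop q.1).1 n⟩, q.2)).2, by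
      refine (SBox.prop q.1).2.mono fun n hn => ?_
      show ((ψ n (⟨q.1.val n, (SBox.prop q.1).1 n⟩, q.2)) : G) = 1
      have ha : (⟨q.1.val n, (SBox.prop q.1).1 n⟩ : ↥(Gn n)) = 1 := Subtype.ext hn
      rw [ha, h1 n q.2]
      rfl⟩

end Phi

section PhiCont

variable {G : Type*} [Group G] [TopologicalSpace G] {Gn : ℕ → Subgroup G}

lemma continuous_PhiFun (ψ : ∀ n, ↥(Gn n) × unitInterval → ↥(Gn n))
    (hc : ∀ n, Continuous (ψ n)) (h1 : ∀ n t, ψ n (1, t) = 1) :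
    Continuous (PhiFun ψ h1) := by
  refine continuous_sbox_rng fun U hU => ?_
  rw [isOpen_iff_forall_mem_open]
  rintro ⟨z, t⟩ hzt
  simp only [mem_setOf_eq] at hzt
  have hzt' : ∀ n, ((ψ n (⟨z.val n, (SBox.prop z).1 n⟩, t)) : G) ∈ U n := hzt
  obtain ⟨N, hN⟩ := eventually_atTop.1 (SBox.prop z).2
  have key : ∀ n : ℕ, ∃ (O : Set G) (J : Set unitInterval), IsOpen O ∧ IsOpen J ∧
      z.val n ∈ O ∧ t ∈ J ∧ (N ≤ n → J = univ) ∧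
      ∀ (a : ↥(Gn n)) (s : unitInterval), (a : G) ∈ O → s ∈ J → ((ψ n (a, s)) : G) ∈ U n := by
    intro n
    have hpre : IsOpen ((ψ n) ⁻¹' (Subtype.val ⁻¹' U n)) :=
      ((hU n).preimage continuous_subtype_val).preimage (hc n)
    rcases lt_or_ge n N with hn | hn
    · -- use continuity at the point
      rcases isOpen_prod_iff.1 hpre ⟨z.val n, (SBox.prop z).1 n⟩ t (hzt' n) with
        ⟨A, J, hA, hJ, haA, htJ, hsub⟩
      rcases isOpen_induced_iff.1 hA with ⟨O, hO, rfl⟩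
      refine ⟨O, J, hO, hJ, haA, htJ, fun h => absurd h (not_le.2 hn), ?_⟩
      intro a s haO hsJ
      exact hsub (mk_mem_prod haO hsJ)
    · -- tube lemma around the constant 1
      have h1U : (1 : G) ∈ U n := by
        have := hzt' n
        have hz1 : (⟨z.val n, (SBox.prop z).1 n⟩ : ↥(Gn n)) = 1 := Subtype.ext (hN n hn)
        rwa [hz1, h1 n t] at this
      have hsub : ({(1 : ↥(Gn n))} ×ˢ (univ : Set unitInterval)) ⊆
          (ψ n) ⁻¹' (Subtype.val ⁻¹' U n) := by
        rintro ⟨a, s⟩ ⟨ha, -⟩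
        simp only [mem_singleton_iff] at ha
        subst ha
        simpa [h1 n s] using h1U
      obtain ⟨A, V, hA, hV, h1A, hunivV, hAV⟩ :=
        generalized_tube_lemma isCompact_singleton isCompact_univ hpre hsub
      rcases isOpen_induced_iff.1 hA with ⟨O, hO, rfl⟩
      refine ⟨O, univ, hO, isOpen_univ, ?_, mem_univ _, fun _ => rfl, ?_⟩
      · have : (1 : ↥(Gn n)) ∈ Subtype.val ⁻¹' O := h1A rfl
        simpa [hN n hn] using this
      · intro a s haO _
        exact hAV (mk_mem_prod haO (hunivV (mem_univ s)))
  choose O J hO hJ hzO htJ hJuniv hsub using key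
  refine ⟨({w : SBox G Gn | ∀ n, w.val n ∈ O n} ×ˢ (⋂ n ∈ Finset.range N, J n)), ?_, ?_, ?_⟩
  · rintro ⟨w, s⟩ ⟨hw, hs⟩
    intro n
    rcases lt_or_ge n N with hn | hn
    · exact hsub n _ s (hw n) (by exact mem_iInter₂.1 hs n (Finset.mem_range.2 hn))
    · exact hsub n _ s (hw n) (by rw [hJuniv n hn]; exact mem_univ s)
  · exact (isOpen_sbox_pi hO).prod (isOpen_biInter_finset fun n _ => hJ n)
  · exact ⟨hzO, mem_iInter₂.2 fun n _ => htJ n⟩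

end PhiCont

section Shift

variable {G : Type*} [Group G] [TopologicalSpace G] {Gn : ℕ → Subgroup G}

/-- Shift a small box element up by `m+1` slots, inserting `g` at slot `m`. -/
def shiftBox (hmono : Monotone Gn) (m : ℕ) (g : G) (hg : g ∈ Gn m) (y : SBox G Gn) :
    SBox G Gn :=
  SBox.mk (fun k => if k < m then 1 else if k = m then g else y.val (k - m - 1))
    ⟨by
      intro k
      by_cases h1 : k < m
      · simp only [h1, if_true]; exact (Gn k).one_mem
      · by_cases h2 : k = m
        · subst h2; simp only [lt_irrefl, if_false, if_pos rfl]; exact hg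
        · simp only [h1, h2, if_false]
          exact hmono (by omega : k - m - 1 ≤ k) ((SBox.prop y).1 (k - m - 1)), by
      obtain ⟨Ny, hNy⟩ := eventually_atTop.1 (SBox.prop y).2
      refine eventually_atTop.2 ⟨Ny + m + 1, fun k hk => ?_⟩
      have h1 : ¬ k < m := by omega
      have h2 : ¬ k = m := by omega
      simp only [h1, h2, if_false]
      exact hNy _ (by omega)⟩

lemma shiftBox_val (hmono : Monotone Gn) (m : ℕ) (g : G) (hg : g ∈ Gn m) (y : SBox G Gn)
    (k : ℕ) : (shiftBox hmono m g hg y).val k =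
      if k < m then 1 else if k = m then g else y.val (k - m - 1) := rfl

lemma shiftBox_val' (hmono : Monotone Gn) (m : ℕ) (g : G) (hg : g ∈ Gn m) (y : SBox G Gn)
    (k : ℕ) : (Subtype.val (shiftBox hmono m g hg y) : ∀ _ : ℕ, G) k =
      if k < m then 1 else if k = m then g else y.val (k - m - 1) := rfl

lemma continuous_shiftBox (hmono : Monotone Gn) (m : ℕ) (g : G) (hg : g ∈ Gn m) :
    Continuous (shiftBox hmono m g hg) := by
  refine continuous_sbox_rng fun U hU => ?_
  by_cases hcase : (∀ k < m, (1 : G) ∈ U k) ∧ g ∈ U m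
  · have heq : {y : SBox G Gn | ∀ k, (shiftBox hmono m g hg y).val k ∈ U k}
        = {y : SBox G Gn | ∀ n, y.val n ∈ U (n + m + 1)} := by
      ext y
      simp only [mem_setOf_eq]
      constructor
      · intro h n
        have := h (n + m + 1)
        rw [shiftBox_val] at this
        have h1 : ¬ n + m + 1 < m := by omega
        have h2 : ¬ n + m + 1 = m := by omega
        simp only [h1, h2, if_false] at this
        simpa only [show n + m + 1 - m - 1 = n by omega] using this
      · intro h k
        rw [shiftBox_val]
        by_cases h1 : k < m
        · simpa [h1] using hcase.1 k h1
        · by_cases h2 : k = m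
          · simpa [h1, h2] using hcase.2
          · simp only [h1, h2, if_false]
            have := h (k - m - 1)
            simpa only [show k - m - 1 + m + 1 = k by omega] using this
    rw [heq]
    exact isOpen_sbox_pi fun n => hU (n + m + 1)
  · have heq : {y : SBox G Gn | ∀ k, (shiftBox hmono m g hg y).val k ∈ U k} = ∅ := by
      ext y
      simp only [mem_setOf_eq, mem_empty_iff_false, iff_false]
      intro h
      apply hcase
      constructor
      · intro k hk
        have := h k
        rwa [shiftBox_val, if_pos hk] at this
      · have := h m
        rwa [shiftBox_val, if_neg (lt_irrefl m), if_pos rfl] at this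
    rw [heq]
    exact isOpen_empty

end Shift

section ListProd

lemma list_prod_shift {G : Type*} [Group G] (f : ℕ → G) (y : ℕ → G) (m N : ℕ) (g : G)
    (hlt : ∀ k < m, f k = 1) (hm : f m = g) (hshift : ∀ n, f (n + m + 1) = y n) :
    ((List.range (m + 1 + N)).map f).prod = g * ((List.range N).map y).prod := by
  rw [List.range_add, List.map_append, List.prod_append]
  congr 1
  · rw [List.range_succ, List.map_append, List.prod_append]
    have h1 : ((List.range m).map f).prod = 1 :=
      List.prod_eq_one (by
        intro a ha
        simp only [List.mem_map, List.mem_range] at ha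
        obtain ⟨k, hk, rfl⟩ := ha
        exact hlt k hk)
    simp [h1, hm]
  · congr 1
    rw [List.map_map]
    apply List.map_congr_left
    intro n _
    simp only [Function.comp_apply]
    rw [show m + 1 + n = n + m + 1 by omega, hshift n]

end ListProd

noncomputable instance (priority := 0) linOrderAny (α : Type*) : LinearOrder α :=
  IsWellOrder.linearOrder WellOrderingRel

/-- Let `G` be a paracompact topological group which is the union of an increasing
sequence of subgroups `(Gₙ)`, with continuous multiplication map `p : ⊡ₙ Gₙ → G`
admitting a local section at the identity, and let `H ≤ G`.  If `H ∩ Gₙ` is homotopy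
dense in `Gₙ` for each `n`, then `H` is homotopy dense in `G`. -/
theorem homotopyDense_of_smallBox_section (G : Type*) [Group G] [TopologicalSpace G]
    [IsTopologicalGroup G] [ParacompactSpace G] (Gn : ℕ → Subgroup G)
    (hmono : Monotone Gn) (hunion : ∀ g : G, ∃ n, g ∈ Gn n)
    (p : {x : ∀ _ : ℕ, G // (∀ n, x n ∈ Gn n) ∧ ∀ᶠ n in Filter.atTop, x n = 1} → G)
    (hp : ∀ x, ∀ N : ℕ, (∀ n, N ≤ n → x.val n = 1) →
      p x = ((List.range N).map x.val).prod)
    (hpc : @Continuous _ _ ((boxTop fun _ : ℕ => G).induced Subtype.val)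
      inferInstance p)
    (hsec : ∃ V ∈ nhds (1 : G),
      ∃ s : V → {x : ∀ _ : ℕ, G // (∀ n, x n ∈ Gn n) ∧ ∀ᶠ n in Filter.atTop, x n = 1},
        @Continuous _ _ inferInstance ((boxTop fun _ : ℕ => G).induced Subtype.val) s ∧
        ∀ v : V, p (s v) = v)
    (H : Subgroup G)
    (hHD : ∀ n, HomotopyDense {g : Gn n | (g : G) ∈ H}) :
    HomotopyDense (H : Set G) := by
  classical
  haveI : NormalSpace G := aux_normal
  -- extract and normalize the coordinate homotopies
  choose φ hφc hφ0 hφH using hHD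
  set ψ : ∀ n, ↥(Gn n) × unitInterval → ↥(Gn n) :=
    fun n q => φ n q * (φ n (1, q.2))⁻¹ with hψ_def
  have hψc : ∀ n, Continuous (ψ n) := fun n =>
    (hφc n).mul (((hφc n).comp (continuous_const.prodMk continuous_snd)).inv)
  have hψ0 : ∀ n (x : ↥(Gn n)), ψ n (x, 0) = x := by
    intro n x
    show φ n (x, 0) * (φ n (1, 0))⁻¹ = x
    rw [hφ0 n x, hφ0 n 1, inv_one, mul_one]
  have hψ1 : ∀ n (t : unitInterval), ψ n (1, t) = 1 := fun n t => mul_inv_cancel _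
  have hψH : ∀ n (x : ↥(Gn n)) (t : unitInterval), t ≠ 0 → ((ψ n (x, t)) : G) ∈ H := by
    intro n x t ht
    show ((φ n (x, t) * (φ n (1, t))⁻¹ : ↥(Gn n)) : G) ∈ H
    push_cast
    exact H.mul_mem (hφH n x t ht) (H.inv_mem (hφH n 1 t ht))
  have hPhi0 : ∀ z : SBox G Gn, PhiFun ψ hψ1 (z, 0) = z := by
    intro z
    apply SBox.ext
    intro n
    show ((ψ n (⟨z.val n, (SBox.prop z).1 n⟩, 0)) : G) = z.val n
    rw [hψ0 n ⟨z.val n, (SBox.prop z).1 n⟩]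
  have hΦc : Continuous (PhiFun ψ hψ1) := continuous_PhiFun ψ hψc hψ1
  -- the local section
  obtain ⟨V, hV, s, hsc, hps⟩ := hsec
  set p' : SBox G Gn → G := fun z => p z with hp'_def
  have hpc' : Continuous p' := hpc
  set s' : ↥V → SBox G Gn := fun v => s v with hs'_def
  have hsc' : Continuous s' := hsc
  set V' : Set G := interior V with hV'_def
  have hV'1 : (1 : G) ∈ V' := mem_interior_iff_mem_nhds.2 hV
  set shat : G → SBox G Gn := fun w =>
    if h : w ∈ V then s' ⟨w, h⟩ else
      SBox.mk (fun _ => 1) ⟨fun n => (Gn n).one_mem, Eventually.of_forall fun _ => rfl⟩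
    with hshat_def
  have hshat_eq : ∀ (w : G) (h : w ∈ V), shat w = s' ⟨w, h⟩ := fun w h => dif_pos h
  have hshatc : ContinuousOn shat V' := by
    rw [continuousOn_iff_continuous_restrict]
    have : V'.domRestrict shat = s' ∘ Set.inclusion interior_subset := by
      funext w
      exact dif_pos (interior_subset w.2)
    rw [this]
    exact hsc'.comp (continuous_inclusion interior_subset)
  choose m hm using hunion
  -- the covering and local homotopies
  set U : G → Set G := fun g => (fun x => g⁻¹ * x) ⁻¹' V' with hU_def
  have hUo : ∀ g : G, IsOpen (U g) :=
    fun g => isOpen_interior.preimage (continuous_const.mul continuous_id)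
  have hUc : (univ : Set G) ⊆ ⋃ g, U g := by
    intro x _
    exact mem_iUnion.2 ⟨x, by simp [hU_def, hV'1]⟩
  set u : G → G × unitInterval → G := fun g q =>
    p' (PhiFun ψ hψ1 (shiftBox hmono (m g) g (hm g) (shat (g⁻¹ * q.1)), q.2)) with hu_def
  have huc : ∀ g, ContinuousOn (u g) (U g ×ˢ (univ : Set unitInterval)) := by
    intro g
    have c1 : ContinuousOn (fun q : G × unitInterval => shat (g⁻¹ * q.1))
        (U g ×ˢ (univ : Set unitInterval)) := by
      refine hshatc.comp ((continuous_const.mul continuous_fst).continuousOn) ?_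
      rintro ⟨x, t⟩ ⟨hx, -⟩
      exact hx
    have c4 : ContinuousOn (fun q : G × unitInterval =>
        ((shiftBox hmono (m g) g (hm g) (shat (g⁻¹ * q.1)), q.2) : SBox G Gn × unitInterval))
        (U g ×ˢ (univ : Set unitInterval)) :=
      (((continuous_shiftBox hmono (m g) g (hm g)).comp_continuousOn c1)).prodMk
        continuous_snd.continuousOn
    exact (hpc'.comp hΦc).comp_continuousOn c4
  have hu0 : ∀ g, ∀ x ∈ U g, u g (x, 0) = x := by
    intro g x hx
    have hxV : g⁻¹ * x ∈ V := interior_subset hx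
    show p' (PhiFun ψ hψ1 (shiftBox hmono (m g) g (hm g) (shat (g⁻¹ * x)), 0)) = x
    rw [hPhi0, hshat_eq _ hxV]
    set y : SBox G Gn := s' ⟨g⁻¹ * x, hxV⟩ with hy_def
    obtain ⟨Ny, hNy⟩ := eventually_atTop.1 (SBox.prop y).2
    have hvanish : ∀ k, (m g + 1 + Ny) ≤ k → (shiftBox hmono (m g) g (hm g) y).val k = 1 := by
      intro k hk
      rw [shiftBox_val]
      have h1 : ¬ k < m g := by omega
      have h2 : ¬ k = m g := by omega
      simp only [h1, h2, if_false]
      exact hNy _ (by omega)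
    rw [show p' (shiftBox hmono (m g) g (hm g) y) = _ from
      hp _ (m g + 1 + Ny) hvanish]
    rw [list_prod_shift _ (Subtype.val y) (m g) Ny g ?hlt ?hm ?hshift]
    case hlt =>
      intro k hk
      rw [shiftBox_val', if_pos hk]
    case hm =>
      rw [shiftBox_val', if_neg (lt_irrefl (m g)), if_pos rfl]
    case hshift =>
      intro n
      rw [shiftBox_val']
      have h1 : ¬ n + m g + 1 < m g := by omega
      have h2 : ¬ n + m g + 1 = m g := by omega
      simp only [h1, h2, if_false]
      congr 1
      omega
    have hpy2 : ((List.range Ny).map (Subtype.val y)).prod = g⁻¹ * x := by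
      rw [← hp y Ny hNy]
      exact hps ⟨g⁻¹ * x, hxV⟩
    rw [hpy2, mul_inv_cancel_left]
  have huH : ∀ g, ∀ x ∈ U g, ∀ t : unitInterval, t ≠ 0 → u g (x, t) ∈ H := by
    intro g x _ t ht
    set w : SBox G Gn := PhiFun ψ hψ1 (shiftBox hmono (m g) g (hm g) (shat (g⁻¹ * x)), t)
      with hw_def
    have hwH : ∀ n, w.val n ∈ H := by
      intro n
      exact hψH n _ t ht
    obtain ⟨Nw, hNw⟩ := eventually_atTop.1 (SBox.prop w).2
    show p' w ∈ H
    rw [show p' w = _ from hp w Nw hNw]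
    refine Subgroup.list_prod_mem H ?_
    intro a ha
    simp only [List.mem_map, List.mem_range] at ha
    obtain ⟨k, -, rfl⟩ := ha
    exact hwH k
  exact glue_homotopyDense H U hUo hUc u huc hu0 huH
end

section
/- Let G be a topological group acting continuously and effectively on M, let K ⊆ L ⊆ M, and suppose the set E^G_K(L,M) = {g|_L : g ∈ G_K} carries an admissible topology τ (one for which the G_K-action by left composition is continuous). If the restriction map r : G_K → E^G_K(L,M)^τ admits a local section at the inclusion i_L, then r admits a local section at every point of E^G_K(L,M)^τ, and r is a principal G_L∩G_K-bundle; in particular τ coincides with the quotient topology induced by r. -/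
open Filter Set TopologicalSpace

/-- The set `E^G_K(L,M)` of restrictions to `L` of elements of `G` fixing `K`
pointwise. -/
abbrev EmbSp (G M : Type*) [Group G] [TopologicalSpace M] [MulAction G M]
    (K L : Set M) : Type _ :=
  {f : L → M // ∃ g : G, (∀ x ∈ K, g • x = x) ∧ f = fun x : L => g • (x : M)}

/-- The restriction map `r : G_K → E^G_K(L,M)`. -/
def restK (G M : Type*) [Group G] [TopologicalSpace M] [MulAction G M] (K L : Set M)
    (g : {g : G // ∀ x ∈ K, g • x = x}) : EmbSp G M K L :=
  ⟨fun x : L => g.val • (x : M), g.val, g.property, rfl⟩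

/-- The inclusion `i_L : L ⊆ M` as an element of `E^G_K(L,M)`. -/
def inclE (G M : Type*) [Group G] [TopologicalSpace M] [MulAction G M] (K L : Set M) :
    EmbSp G M K L :=
  ⟨fun x : L => (x : M), 1, fun x _ => one_smul G x, by
    funext x; rw [one_smul]⟩

/-- The action of `G_K` on `E^G_K(L,M)` by left composition. -/
def actE {G M : Type*} [Group G] [TopologicalSpace M] [MulAction G M] {K L : Set M}
    (g : {g : G // ∀ x ∈ K, g • x = x}) (f : EmbSp G M K L) : EmbSp G M K L :=
  ⟨fun x => g.val • f.val x, by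
    obtain ⟨g0, hg0, hf⟩ := f.property
    refine ⟨g.val * g0, fun x hx => ?_, ?_⟩
    · rw [mul_smul, hg0 x hx, g.property x hx]
    · funext x; simp only [hf, mul_smul]⟩

/-- Let `G` act continuously and effectively on `M`, `K ⊆ L ⊆ M`, and let
`E^G_K(L,M)` carry an admissible topology `τ` (one making the `G_K`-action continuous).
If the restriction map `r : G_K → E^G_K(L,M)` admits a local section at the inclusion
`i_L`, then `r` admits a local section at every point, `τ` is the quotient topology
induced by `r`, and `r` is a principal `G_L ∩ G_K`-bundle (locally trivial with fiber
`G_L`, compatibly with right translation). -/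
theorem restriction_principal_bundle (G M : Type*) [Group G] [TopologicalSpace G]
    [IsTopologicalGroup G] [TopologicalSpace M] [MulAction G M]
    (hcont : Continuous fun q : G × M => q.1 • q.2)
    (heff : ∀ g : G, (∀ x : M, g • x = x) → g = 1)
    (K L : Set M) (hKL : K ⊆ L)
    (τ : TopologicalSpace (EmbSp G M K L))
    (hadm : @Continuous ({g : G // ∀ x ∈ K, g • x = x} × EmbSp G M K L)
      (EmbSp G M K L) (@instTopologicalSpaceProd _ _ inferInstance τ) τ
      (fun q => actE q.1 q.2))
    (hsec : ∃ V ∈ @nhds _ τ (inclE G M K L),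
      ∃ s : V → {g : G // ∀ x ∈ K, g • x = x},
        @Continuous _ _ (τ.induced Subtype.val) inferInstance s ∧
        ∀ v : V, restK G M K L (s v) = (v : EmbSp G M K L)) :
    (∀ f : EmbSp G M K L, ∃ V ∈ @nhds _ τ f,
      ∃ s : V → {g : G // ∀ x ∈ K, g • x = x},
        @Continuous _ _ (τ.induced Subtype.val) inferInstance s ∧
        ∀ v : V, restK G M K L (s v) = (v : EmbSp G M K L)) ∧
    (τ = TopologicalSpace.coinduced (restK G M K L) inferInstance) ∧
    (∀ f : EmbSp G M K L, ∃ V ∈ @nhds _ τ f,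
      ∃ e : (V × {g : G // ∀ x ∈ L, g • x = x}) ≃
            {g : {g : G // ∀ x ∈ K, g • x = x} // restK G M K L g ∈ V},
        @IsHomeomorph _ _
          (@instTopologicalSpaceProd _ _ (τ.induced Subtype.val) inferInstance)
          inferInstance e ∧
        (∀ q : V × {g : G // ∀ x ∈ L, g • x = x},
          restK G M K L (e q).val = (q.1 : EmbSp G M K L)) ∧
        (∀ (v : V) (h h' : {g : G // ∀ x ∈ L, g • x = x}),
          ((e (v, ⟨h.val * h'.val, fun x hx => by
              rw [mul_smul, h'.property x hx, h.property x hx]⟩)).val : G)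
            = ((e (v, h)).val : G) * h'.val)) := by
  letI : TopologicalSpace (EmbSp G M K L) := τ
  -- `restK` coincides with acting on the inclusion
  have hrk : ∀ g : {g : G // ∀ x ∈ K, g • x = x},
      restK G M K L g = actE g (inclE G M K L) := fun g => Subtype.ext rfl
  have hadm' : Continuous (fun q : {g : G // ∀ x ∈ K, g • x = x} × EmbSp G M K L =>
      actE q.1 q.2) := hadm
  have hrcont : Continuous (restK G M K L) := by
    have h1 : Continuous fun g : {g : G // ∀ x ∈ K, g • x = x} =>
        actE g (inclE G M K L) := hadm'.comp (continuous_id.prodMk continuous_const)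
    have h2 : (fun g : {g : G // ∀ x ∈ K, g • x = x} => actE g (inclE G M K L))
        = restK G M K L := funext fun g => (hrk g).symm
    rwa [h2] at h1
  obtain ⟨V₀, hV₀, s₀, hs₀c, hs₀⟩ := hsec
  have hs₀c' : Continuous s₀ := hs₀c
  -- Part 1: local sections everywhere
  have key : ∀ f : EmbSp G M K L, ∃ V ∈ nhds f,
      ∃ s : V → {g : G // ∀ x ∈ K, g • x = x},
        Continuous s ∧ ∀ v : V, restK G M K L (s v) = (v : EmbSp G M K L) := by
    intro f
    obtain ⟨g₀, hg₀, hf⟩ := f.property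
    have hg₀' : ∀ x ∈ K, g₀⁻¹ • x = x := fun x hx => by
      conv_lhs => rw [← hg₀ x hx]
      rw [inv_smul_smul]
    set φ : EmbSp G M K L → EmbSp G M K L := actE ⟨g₀⁻¹, hg₀'⟩ with hφ
    have hφc : Continuous φ := hadm'.comp (continuous_const.prodMk continuous_id)
    have hφf : φ f = inclE G M K L := by
      apply Subtype.ext
      funext x
      show g₀⁻¹ • f.val x = (x : M)
      rw [hf]
      exact inv_smul_smul g₀ (x : M)
    have hVmem : φ ⁻¹' V₀ ∈ nhds f :=
      hφc.continuousAt.preimage_mem_nhds (hφf ▸ hV₀)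
    refine ⟨φ ⁻¹' V₀, hVmem,
      fun v => ⟨g₀ * (s₀ ⟨φ v, v.2⟩).val, fun x hx => by
        rw [mul_smul, (s₀ ⟨φ v.1, v.2⟩).property x hx, hg₀ x hx]⟩, ?_, ?_⟩
    · refine Continuous.subtype_mk ?_ _
      exact continuous_const.mul
        (hs₀c'.comp ((hφc.comp continuous_subtype_val).subtype_mk _)).subtype_val
    · intro v
      apply Subtype.ext
      funext x
      have h1 := congrFun (congrArg Subtype.val (hs₀ ⟨φ v, v.2⟩)) x
      show (g₀ * (s₀ ⟨φ v.1, v.2⟩).val) • (x : M) = (v : EmbSp G M K L).val x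
      have h2 : (s₀ ⟨φ v.1, v.2⟩).val • (x : M) = g₀⁻¹ • (v : EmbSp G M K L).val x := h1
      rw [mul_smul, h2, smul_inv_smul]
  refine ⟨key, ?_, ?_⟩
  -- Part 2: τ is the quotient topology
  · refine le_antisymm ?_ (continuous_iff_coinduced_le.mp hrcont)
    intro U hU
    rw [isOpen_coinduced] at hU
    show IsOpen U
    rw [isOpen_iff_mem_nhds]
    intro f hfU
    obtain ⟨V, hV, s, hsc, hss⟩ := key f
    have hop : IsOpen (Subtype.val ⁻¹' U : Set V) := by
      have h1 : IsOpen (s ⁻¹' (restK G M K L ⁻¹' U)) := hU.preimage hsc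
      convert h1 using 1
      ext v
      simp only [mem_preimage, hss v]
    obtain ⟨O, hO, hOU⟩ := isOpen_induced_iff.mp hop
    have hfV : f ∈ V := mem_of_mem_nhds hV
    have hfO : f ∈ O := by
      have : (⟨f, hfV⟩ : V) ∈ Subtype.val ⁻¹' O := by rw [hOU]; exact hfU
      exact this
    refine mem_of_superset (inter_mem (hO.mem_nhds hfO) hV) ?_
    rintro x ⟨hxO, hxV⟩
    have : (⟨x, hxV⟩ : V) ∈ Subtype.val ⁻¹' U := by rw [← hOU]; exact hxO
    exact this
  -- Part 3: local triviality
  · intro f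
    obtain ⟨V, hV, s, hsc, hss⟩ := key f
    -- elements of G_L fix K
    have hGLK : ∀ h : {g : G // ∀ x ∈ L, g • x = x}, ∀ x ∈ K, h.val • x = x :=
      fun h x hx => h.property x (hKL hx)
    -- forward map
    have hmem : ∀ (v : V) (h : {g : G // ∀ x ∈ L, g • x = x}),
        restK G M K L ⟨(s v).val * h.val, fun x hx => by
          rw [mul_smul, hGLK h x hx, (s v).property x hx]⟩ = (v : EmbSp G M K L) := by
      intro v h
      apply Subtype.ext
      funext x
      show ((s v).val * h.val) • (x : M) = (v : EmbSp G M K L).val x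
      have h1 := congrFun (congrArg Subtype.val (hss v)) x
      rw [mul_smul, h.property x x.2]
      exact h1
    -- inverse data: for g with restK g ∈ V, (s ⟨restK g, _⟩)⁻¹ * g fixes L
    have hinvL : ∀ g : {g : {g : G // ∀ x ∈ K, g • x = x} // restK G M K L g ∈ V},
        ∀ x ∈ L, ((s ⟨restK G M K L g.val, g.2⟩).val⁻¹ * g.val.val) • x = x := by
      intro g x hx
      have h1 := congrFun (congrArg Subtype.val (hss ⟨restK G M K L g.val, g.2⟩)) ⟨x, hx⟩
      -- h1 : (s ⟨restK g, _⟩).val • x = (restK g).val ⟨x,hx⟩ = g.val • x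
      rw [mul_smul]
      have h2 : g.val.val • x = (s ⟨restK G M K L g.val, g.2⟩).val • x := h1.symm
      rw [h2, inv_smul_smul]
    let eto : V × {g : G // ∀ x ∈ L, g • x = x} →
        {g : {g : G // ∀ x ∈ K, g • x = x} // restK G M K L g ∈ V} :=
      fun q => ⟨⟨(s q.1).val * q.2.val, fun x hx => by
          rw [mul_smul, hGLK q.2 x hx, (s q.1).property x hx]⟩,
        by rw [hmem q.1 q.2]; exact q.1.2⟩
    let einv : {g : {g : G // ∀ x ∈ K, g • x = x} // restK G M K L g ∈ V} →
        V × {g : G // ∀ x ∈ L, g • x = x} :=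
      fun g => (⟨restK G M K L g.val, g.2⟩,
        ⟨(s ⟨restK G M K L g.val, g.2⟩).val⁻¹ * g.val.val, hinvL g⟩)
    have hleft : ∀ q, einv (eto q) = q := by
      intro ⟨v, h⟩
      have hv : (⟨restK G M K L (eto (v, h)).val, (eto (v, h)).2⟩ : V) = v :=
        Subtype.ext (hmem v h)
      refine Prod.ext hv ?_
      show (⟨(s ⟨restK G M K L (eto (v, h)).val, (eto (v, h)).2⟩).val⁻¹ *
        ((s v).val * h.val), _⟩ : {g : G // ∀ x ∈ L, g • x = x}) = h
      apply Subtype.ext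
      show (s ⟨restK G M K L (eto (v, h)).val, (eto (v, h)).2⟩).val⁻¹ *
        ((s v).val * h.val) = h.val
      rw [hv, inv_mul_cancel_left]
    have hright : ∀ g, eto (einv g) = g := by
      intro g
      apply Subtype.ext
      apply Subtype.ext
      show (s ⟨restK G M K L g.val, g.2⟩).val *
        ((s ⟨restK G M K L g.val, g.2⟩).val⁻¹ * g.val.val) = g.val.val
      rw [mul_inv_cancel_left]
    let e : (V × {g : G // ∀ x ∈ L, g • x = x}) ≃
        {g : {g : G // ∀ x ∈ K, g • x = x} // restK G M K L g ∈ V} :=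
      ⟨eto, einv, hleft, hright⟩
    have hsc' : Continuous s := hsc
    have hetoc : Continuous eto := by
      refine Continuous.subtype_mk (Continuous.subtype_mk ?_ _) _
      exact (hsc'.comp continuous_fst).subtype_val.mul continuous_snd.subtype_val
    have heinvc : Continuous einv := by
      have hρ : Continuous (fun g : {g : {g : G // ∀ x ∈ K, g • x = x} //
          restK G M K L g ∈ V} => (⟨restK G M K L g.val, g.2⟩ : V)) :=
        Continuous.subtype_mk (hrcont.comp continuous_subtype_val) _
      refine Continuous.prodMk hρ ?_
      refine Continuous.subtype_mk ?_ _
      exact ((hsc'.comp hρ).subtype_val.inv).mul continuous_subtype_val.subtype_val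
    refine ⟨V, hV, e, ?_, ?_, ?_⟩
    · exact (Homeomorph.mk e hetoc heinvc).isHomeomorph
    · intro q
      exact hmem q.1 q.2
    · intro v h h'
      show (s v).val * (h.val * h'.val) = (s v).val * h.val * h'.val
      rw [mul_assoc]
end
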